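/- arXiv:2112.14396 — 2 statements merged into one kernel-verified Lean document; each statement's English description precedes it below -/
import Mathlib

section
/- There is an absolute constant C such that for all real numbers U ≥ 1 and R ≥ 1, ∫_{−U}^{U} |∑_{R ≤ r < 2R, r ∈ ℕ} r^{−1/2+it}|² dt ≤ C·(U + R). -/
open MeasureTheory Complex


/-- Tail sum bound: `∑_{d=1}^{N} 1/(1+γd²) ≤ 1 + 3/√γ`. -/
lemma tail_sum (γ : ℝ) (hγ : 0 < γ) (N : ℕ) :
    ∑ d ∈ Finset.Icc 1 N, 1 / (1 + γ * (d : ℝ) ^ 2) ≤ 1 + 3 / Real.sqrt γ := by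
  have hs : 0 < Real.sqrt γ := Real.sqrt_pos.2 hγ
  have hsq : Real.sqrt γ * Real.sqrt γ = γ := Real.mul_self_sqrt hγ.le
  set D : ℕ := ⌈(Real.sqrt γ)⁻¹⌉₊ with hD
  rw [← Finset.sum_filter_add_sum_filter_not (Finset.Icc 1 N) (· ≤ D)]
  have h1 : ∑ d ∈ (Finset.Icc 1 N).filter (· ≤ D), 1 / (1 + γ * (d : ℝ) ^ 2)
      ≤ (D : ℝ) := by
    calc ∑ d ∈ (Finset.Icc 1 N).filter (· ≤ D), 1 / (1 + γ * (d : ℝ) ^ 2)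
        ≤ ∑ _d ∈ (Finset.Icc 1 N).filter (· ≤ D), (1:ℝ) := by
          refine Finset.sum_le_sum fun d _ => ?_
          rw [div_le_one (by positivity)]
          nlinarith [sq_nonneg (d:ℝ), hγ.le]
      _ = ((Finset.Icc 1 N).filter (· ≤ D)).card := by simp
      _ ≤ (D : ℝ) := by
          have hsub : (Finset.Icc 1 N).filter (· ≤ D) ⊆ Finset.Icc 1 D := by
            intro d hd
            simp only [Finset.mem_filter, Finset.mem_Icc] at hd ⊢
            omega
          have := Finset.card_le_card hsub
          simp only [Nat.card_Icc] at this
          exact_mod_cast this.trans (by omega)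
  have h2 : ∑ d ∈ (Finset.Icc 1 N).filter (¬ · ≤ D), 1 / (1 + γ * (d : ℝ) ^ 2)
      ≤ 2 / Real.sqrt γ := by
    have hle : ∑ d ∈ (Finset.Icc 1 N).filter (¬ · ≤ D), 1 / (1 + γ * (d : ℝ) ^ 2)
        ≤ γ⁻¹ * ∑ d ∈ (Finset.Icc 1 N).filter (¬ · ≤ D), ((d:ℝ) ^ 2)⁻¹ := by
      rw [Finset.mul_sum]
      refine Finset.sum_le_sum fun d hd => ?_
      simp only [Finset.mem_filter, Finset.mem_Icc, not_le] at hd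
      have hd1 : (1:ℝ) ≤ (d:ℝ) := by exact_mod_cast hd.1.1
      have h0 : (0:ℝ) < γ * (d:ℝ)^2 := by positivity
      rw [← mul_inv, one_div]
      exact inv_anti₀ h0 (by linarith)
    have hsub : ∑ d ∈ (Finset.Icc 1 N).filter (¬ · ≤ D), ((d:ℝ) ^ 2)⁻¹
        ≤ ∑ d ∈ Finset.Ioo D (N+1), ((d:ℝ) ^ 2)⁻¹ := by
      refine Finset.sum_le_sum_of_subset_of_nonneg ?_ (fun d _ _ => by positivity)
      intro d hd
      simp only [Finset.mem_filter, Finset.mem_Icc, not_le, Finset.mem_Ioo] at hd ⊢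
      omega
    have htail : ∑ d ∈ Finset.Ioo D (N+1), ((d:ℝ) ^ 2)⁻¹ ≤ 2 / ((D:ℝ) + 1) :=
      sum_Ioo_inv_sq_le D (N+1)
    have hDlb : (Real.sqrt γ)⁻¹ ≤ (D:ℝ) + 1 :=
      le_trans (Nat.le_ceil _) (by linarith)
    have hcancel : Real.sqrt γ * (Real.sqrt γ)⁻¹ = 1 := mul_inv_cancel₀ hs.ne'
    have e1 : γ⁻¹ * (2 * Real.sqrt γ) = 2 / Real.sqrt γ := by
      rw [eq_div_iff hs.ne']
      field_simp
      nlinarith [hsq]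
    have e2 : 2 / ((D:ℝ) + 1) ≤ 2 * Real.sqrt γ := by
      rw [div_le_iff₀ (by positivity)]
      nlinarith [mul_le_mul_of_nonneg_left hDlb (by positivity : (0:ℝ) ≤ 2 * Real.sqrt γ)]
    have hfin : γ⁻¹ * (2 / ((D:ℝ) + 1)) ≤ 2 / Real.sqrt γ := by
      calc γ⁻¹ * (2 / ((D:ℝ) + 1)) ≤ γ⁻¹ * (2 * Real.sqrt γ) :=
            mul_le_mul_of_nonneg_left e2 (by positivity)
        _ = 2 / Real.sqrt γ := e1
    calc _ ≤ γ⁻¹ * ∑ d ∈ (Finset.Icc 1 N).filter (¬ · ≤ D), ((d:ℝ) ^ 2)⁻¹ := hle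
      _ ≤ γ⁻¹ * (2 / ((D:ℝ) + 1)) := by
          exact mul_le_mul_of_nonneg_left (hsub.trans htail) (by positivity)
      _ ≤ 2 / Real.sqrt γ := hfin
  have hDub : (D:ℝ) ≤ (Real.sqrt γ)⁻¹ + 1 :=
    le_of_lt (Nat.ceil_lt_add_one (by positivity))
  have h3 : (Real.sqrt γ)⁻¹ = 1 / Real.sqrt γ := (one_div _).symm
  refine le_trans (add_le_add h1 h2) ?_
  rw [h3] at hDub
  ring_nf at hDub ⊢
  linarith

lemma dist_sum (q : ℕ → ℝ) (hq : ∀ d, 0 ≤ q d) (n0 N r : ℕ) (hr : r < N) :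
    ∑ s ∈ Finset.Ico n0 N, q (max r s - min r s) ≤ q 0 + 2 * ∑ d ∈ Finset.Icc 1 N, q d := by
  rw [← Finset.sum_filter_add_sum_filter_not (Finset.Ico n0 N) (· ≤ r)]
  have h1 : ∑ s ∈ (Finset.Ico n0 N).filter (· ≤ r), q (max r s - min r s)
      ≤ q 0 + ∑ d ∈ Finset.Icc 1 N, q d := by
    have e : ∀ s ∈ (Finset.Ico n0 N).filter (· ≤ r), q (max r s - min r s) = q (r - s) := by
      intro s hs; simp only [Finset.mem_filter] at hs
      congr 1; omega
    rw [Finset.sum_congr rfl e]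
    have himg : ∑ d ∈ ((Finset.Ico n0 N).filter (· ≤ r)).image (fun s => r - s), q d
        = ∑ s ∈ (Finset.Ico n0 N).filter (· ≤ r), q (r - s) := by
      refine Finset.sum_image ?_
      intro x hx y hy hxy
      simp only [Finset.mem_coe, Finset.mem_filter] at hx hy hxy
      omega
    rw [← himg]
    have hsub : ((Finset.Ico n0 N).filter (· ≤ r)).image (fun s => r - s)
        ⊆ insert 0 (Finset.Icc 1 N) := by
      intro d hd
      simp only [Finset.mem_image, Finset.mem_filter, Finset.mem_Ico, Finset.mem_insert,
        Finset.mem_Icc] at hd ⊢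
      omega
    refine le_trans (Finset.sum_le_sum_of_subset_of_nonneg hsub fun d _ _ => hq d) ?_
    rw [Finset.sum_insert (by simp)]
  have h2 : ∑ s ∈ (Finset.Ico n0 N).filter (¬ · ≤ r), q (max r s - min r s)
      ≤ ∑ d ∈ Finset.Icc 1 N, q d := by
    have e : ∀ s ∈ (Finset.Ico n0 N).filter (¬ · ≤ r), q (max r s - min r s) = q (s - r) := by
      intro s hs; simp only [Finset.mem_filter, not_le] at hs
      congr 1; omega
    rw [Finset.sum_congr rfl e]
    have himg : ∑ d ∈ ((Finset.Ico n0 N).filter (¬ · ≤ r)).image (fun s => s - r), q d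
        = ∑ s ∈ (Finset.Ico n0 N).filter (¬ · ≤ r), q (s - r) := by
      refine Finset.sum_image ?_
      intro x hx y hy hxy
      simp only [Finset.mem_coe, Finset.mem_filter, not_le] at hx hy hxy
      omega
    rw [← himg]
    refine Finset.sum_le_sum_of_subset_of_nonneg ?_ fun d _ _ => hq d
    intro d hd
    simp only [Finset.mem_image, Finset.mem_filter, Finset.mem_Ico, not_le,
      Finset.mem_Icc] at hd ⊢
    omega
  linarith

lemma log_gap (R : ℝ) (r s : ℕ) (h1s : 1 ≤ s) (hsr : s ≤ r) (hr2 : (r:ℝ) < 2*R) :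
    ((r:ℝ) - s) / (2*R) ≤ Real.log r - Real.log s := by
  have hs0 : (0:ℝ) < s := by exact_mod_cast h1s
  have hr0 : (0:ℝ) < r := lt_of_lt_of_le hs0 (by exact_mod_cast hsr)
  have h1 : Real.log ((s:ℝ)/r) ≤ (s:ℝ)/r - 1 := Real.log_le_sub_one_of_pos (by positivity)
  rw [Real.log_div hs0.ne' hr0.ne'] at h1
  have h3 : 1 - (s:ℝ)/r = ((r:ℝ) - s)/r := by field_simp
  have h4 : ((r:ℝ) - s)/(2*R) ≤ ((r:ℝ) - s)/r := by
    apply div_le_div_of_nonneg_left ?_ hr0 (le_of_lt hr2)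
    · have : (s:ℝ) ≤ r := by exact_mod_cast hsr
      linarith
  linarith

-- given: Δ² ≥ γ δ² with γ = U²/(8R²), where δ = natural distance
lemma gap_sq (U R : ℝ) (hU : 1 ≤ U) (hR : 1 ≤ R) (r s : ℕ) (h1r : 1 ≤ r) (h1s : 1 ≤ s)
    (hr2 : (r:ℝ) < 2*R) (hs2 : (s:ℝ) < 2*R) :
    Real.exp (-((Real.log r - Real.log s)^2 * (U^2/2)))
      ≤ 1 / (1 + (U^2/(8*R^2)) * ((max r s - min r s : ℕ):ℝ)^2) := by
  have hR0 : (0:ℝ) < R := by linarith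
  set δ : ℕ := max r s - min r s with hδ
  set γ : ℝ := U^2/(8*R^2) with hγ
  have key : γ * (δ:ℝ)^2 ≤ (Real.log r - Real.log s)^2 * (U^2/2) := by
    have hgap : (δ:ℝ)/(2*R) ≤ |Real.log r - Real.log s| := by
      rcases le_total s r with h | h
      · have := log_gap R r s h1s h hr2
        have hc : ((δ:ℕ):ℝ) = (r:ℝ) - s := by
          have : δ = r - s := by omega
          rw [this, Nat.cast_sub h]
        rw [hc]
        exact le_trans this (le_abs_self _)
      · have := log_gap R s r h1r h hs2
        have hc : ((δ:ℕ):ℝ) = (s:ℝ) - r := by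
          have : δ = s - r := by omega
          rw [this, Nat.cast_sub h]
        rw [hc]
        refine le_trans this ?_
        rw [abs_sub_comm]
        exact le_abs_self _
    have hsq : ((δ:ℝ)/(2*R))^2 ≤ (Real.log r - Real.log s)^2 := by
      rw [← _root_.sq_abs (Real.log r - Real.log s)]
      exact pow_le_pow_left₀ (by positivity) hgap 2
    have e : ((δ:ℝ)/(2*R))^2 * (U^2/2) = γ * (δ:ℝ)^2 := by
      rw [hγ]; field_simp; ring
    nlinarith [sq_nonneg U, hsq]
  have h1 : Real.exp (-((Real.log r - Real.log s)^2 * (U^2/2)))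
      ≤ Real.exp (-(γ * (δ:ℝ)^2)) := Real.exp_le_exp.2 (by linarith)
  have h2 : Real.exp (-(γ * (δ:ℝ)^2)) ≤ 1 / (1 + γ * (δ:ℝ)^2) := by
    have hpos : (0:ℝ) < 1 + γ * (δ:ℝ)^2 := by positivity
    rw [le_div_iff₀ hpos]
    calc Real.exp (-(γ * (δ:ℝ)^2)) * (1 + γ * (δ:ℝ)^2)
        ≤ Real.exp (-(γ * (δ:ℝ)^2)) * Real.exp (γ * (δ:ℝ)^2) := by
          refine mul_le_mul_of_nonneg_left ?_ (Real.exp_nonneg _)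
          linarith [Real.add_one_le_exp (γ * (δ:ℝ)^2)]
      _ = 1 := by rw [← Real.exp_add]; simp
  exact h1.trans h2

lemma counting (U R : ℝ) (hU : 1 ≤ U) (hR : 1 ≤ R) :
    ∑ r ∈ Finset.Ico ⌈R⌉₊ ⌈2*R⌉₊, ∑ s ∈ Finset.Ico ⌈R⌉₊ ⌈2*R⌉₊,
      (r:ℝ)^(-(1/2):ℝ) * (s:ℝ)^(-(1/2):ℝ) *
        Real.exp (-((Real.log r - Real.log s)^2 * (U^2/2)))
      ≤ 6 + 36 * (R / U) := by
  have hR0 : (0:ℝ) < R := by linarith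
  have hU0 : (0:ℝ) < U := by linarith
  set n0 := ⌈R⌉₊ with hn0
  set N := ⌈2*R⌉₊ with hN
  set γ : ℝ := U^2/(8*R^2) with hγ
  have hγ0 : 0 < γ := by positivity
  -- membership facts
  have hmem : ∀ r ∈ Finset.Ico n0 N, R ≤ (r:ℝ) ∧ (r:ℝ) < 2*R ∧ 1 ≤ r := by
    intro r hr
    rw [Finset.mem_Ico] at hr
    have h1 : R ≤ (r:ℝ) := le_trans (Nat.le_ceil R) (by exact_mod_cast hr.1)
    have hNr : (N:ℝ) < 2*R + 1 := Nat.ceil_lt_add_one (by positivity)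
    have h2 : (r:ℝ) + 1 ≤ (N:ℝ) := by exact_mod_cast hr.2
    have h3 : (1:ℝ) ≤ (r:ℝ) := le_trans hR h1
    exact ⟨h1, by linarith, by exact_mod_cast h3⟩
  -- coefficient bound
  have hcoef : ∀ r ∈ Finset.Ico n0 N, ∀ s ∈ Finset.Ico n0 N,
      (r:ℝ)^(-(1/2):ℝ) * (s:ℝ)^(-(1/2):ℝ) ≤ 1/R := by
    intro r hr s hs
    obtain ⟨hr1, -, hr3⟩ := hmem r hr
    obtain ⟨hs1, -, hs3⟩ := hmem s hs
    have h1 : (r:ℝ)^(-(1/2):ℝ) ≤ R^(-(1/2):ℝ) :=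
      Real.rpow_le_rpow_of_nonpos hR0 hr1 (by norm_num)
    have h2 : (s:ℝ)^(-(1/2):ℝ) ≤ R^(-(1/2):ℝ) :=
      Real.rpow_le_rpow_of_nonpos hR0 hs1 (by norm_num)
    have h3 : R^(-(1/2):ℝ) * R^(-(1/2):ℝ) = 1/R := by
      rw [← Real.rpow_add hR0]
      norm_num [Real.rpow_neg_one]
    calc (r:ℝ)^(-(1/2):ℝ) * (s:ℝ)^(-(1/2):ℝ)
        ≤ R^(-(1/2):ℝ) * R^(-(1/2):ℝ) := by
          have hrp : (0:ℝ) ≤ (r:ℝ)^(-(1/2):ℝ) := Real.rpow_nonneg (by positivity) _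
          have hsp : (0:ℝ) ≤ R^(-(1/2):ℝ) := Real.rpow_nonneg hR0.le _
          exact mul_le_mul h1 h2 (Real.rpow_nonneg (by positivity) _) hsp
      _ = 1/R := h3
  -- inner sum bound
  have hsqrtγ : U/(3*R) ≤ Real.sqrt γ := by
    rw [Real.le_sqrt (by positivity) hγ0.le]
    rw [hγ, div_pow]
    rw [div_le_div_iff₀ (by positivity) (by positivity)]
    nlinarith [sq_nonneg U, sq_nonneg R]
  have hinvγ : 3 / Real.sqrt γ ≤ 9 * R / U := by
    have h1 : 0 < Real.sqrt γ := Real.sqrt_pos.2 hγ0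
    rw [div_le_div_iff₀ h1 hU0]
    have h2 : U/(3*R) * (3*R) = U := by field_simp
    calc 3 * U = (U/(3*R)) * (3*R) * 3 := by rw [h2]; ring
      _ ≤ Real.sqrt γ * (3*R) * 3 := by
          refine mul_le_mul_of_nonneg_right (mul_le_mul_of_nonneg_right hsqrtγ ?_) ?_ <;> positivity
      _ = 9 * R * Real.sqrt γ := by ring
  have hinner : ∀ r ∈ Finset.Ico n0 N,
      ∑ s ∈ Finset.Ico n0 N, Real.exp (-((Real.log r - Real.log s)^2 * (U^2/2)))
        ≤ 3 + 18 * (R / U) := by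
    intro r hr
    obtain ⟨-, -, hr3⟩ := hmem r hr
    have hrN : r < N := (Finset.mem_Ico.1 hr).2
    have step1 : ∑ s ∈ Finset.Ico n0 N, Real.exp (-((Real.log r - Real.log s)^2 * (U^2/2)))
        ≤ ∑ s ∈ Finset.Ico n0 N, 1 / (1 + γ * ((max r s - min r s : ℕ):ℝ)^2) := by
      refine Finset.sum_le_sum fun s hs => ?_
      obtain ⟨-, hs2, hs3⟩ := hmem s hs
      obtain ⟨-, hr2, -⟩ := hmem r hr
      exact gap_sq U R hU hR r s hr3 hs3 hr2 hs2
    have step2 : ∑ s ∈ Finset.Ico n0 N, 1 / (1 + γ * ((max r s - min r s : ℕ):ℝ)^2)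
        ≤ 1 + 2 * ∑ d ∈ Finset.Icc 1 N, 1 / (1 + γ * (d:ℝ)^2) := by
      have := dist_sum (fun d => 1 / (1 + γ * (d:ℝ)^2)) (fun d => by positivity) n0 N r hrN
      simpa using this
    have step3 : ∑ d ∈ Finset.Icc 1 N, 1 / (1 + γ * (d:ℝ)^2) ≤ 1 + 9 * R / U :=
      le_trans (tail_sum γ hγ0 N) (by linarith)
    calc ∑ s ∈ Finset.Ico n0 N, Real.exp (-((Real.log r - Real.log s)^2 * (U^2/2)))
        ≤ 1 + 2 * (1 + 9 * R / U) := by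
          refine le_trans step1 (le_trans step2 ?_)
          linarith
      _ = 3 + 18 * (R / U) := by ring
  -- cardinality bound
  have hcard : ((Finset.Ico n0 N).card : ℝ) ≤ 2 * R := by
    by_cases h : n0 ≤ N
    · rw [Nat.card_Ico, Nat.cast_sub h]
      have h1 : R ≤ (n0:ℝ) := Nat.le_ceil R
      have h2 : (N:ℝ) < 2*R + 1 := Nat.ceil_lt_add_one (by positivity)
      linarith
    · rw [Nat.card_Ico]
      have : N - n0 = 0 := by omega
      rw [this]
      simp
      positivity
  -- put everything together
  have hmain : ∀ r ∈ Finset.Ico n0 N,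
      ∑ s ∈ Finset.Ico n0 N, (r:ℝ)^(-(1/2):ℝ) * (s:ℝ)^(-(1/2):ℝ) *
        Real.exp (-((Real.log r - Real.log s)^2 * (U^2/2)))
      ≤ (1/R) * (3 + 18 * (R / U)) := by
    intro r hr
    calc ∑ s ∈ Finset.Ico n0 N, (r:ℝ)^(-(1/2):ℝ) * (s:ℝ)^(-(1/2):ℝ) *
          Real.exp (-((Real.log r - Real.log s)^2 * (U^2/2)))
        ≤ ∑ s ∈ Finset.Ico n0 N, (1/R) *
            Real.exp (-((Real.log r - Real.log s)^2 * (U^2/2))) := by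
          refine Finset.sum_le_sum fun s hs => ?_
          exact mul_le_mul_of_nonneg_right (hcoef r hr s hs) (Real.exp_nonneg _)
      _ = (1/R) * ∑ s ∈ Finset.Ico n0 N,
            Real.exp (-((Real.log r - Real.log s)^2 * (U^2/2))) := by
          rw [Finset.mul_sum]
      _ ≤ (1/R) * (3 + 18 * (R / U)) := by
          refine mul_le_mul_of_nonneg_left (hinner r hr) (by positivity)
  calc ∑ r ∈ Finset.Ico n0 N, ∑ s ∈ Finset.Ico n0 N,
        (r:ℝ)^(-(1/2):ℝ) * (s:ℝ)^(-(1/2):ℝ) *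
          Real.exp (-((Real.log r - Real.log s)^2 * (U^2/2)))
      ≤ ∑ _r ∈ Finset.Ico n0 N, (1/R) * (3 + 18 * (R / U)) :=
        Finset.sum_le_sum hmain
    _ = ((Finset.Ico n0 N).card : ℝ) * ((1/R) * (3 + 18 * (R / U))) := by
        rw [Finset.sum_const, nsmul_eq_mul]
    _ ≤ (2*R) * ((1/R) * (3 + 18 * (R / U))) := by
        refine mul_le_mul_of_nonneg_right hcard (by positivity)
    _ = 6 + 36 * (R / U) := by
        field_simp
        ring

-- Step A: integrand rewrite and integrability for a single frequency
lemma gauss_integrable (U : ℝ) (hU : 0 < U) (Δ : ℝ) :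
    Integrable (fun t : ℝ => ((Real.exp 2⁻¹ * Real.exp (-((2*U^2)⁻¹) * t^2) : ℝ) : ℂ) *
      Complex.exp (Complex.I * (Δ:ℂ) * (t:ℂ))) := by
  have hb : (0:ℝ) < (2*U^2)⁻¹ := by positivity
  have heq : (fun t : ℝ => ((Real.exp 2⁻¹ * Real.exp (-((2*U^2)⁻¹) * t^2) : ℝ) : ℂ) *
      Complex.exp (Complex.I * (Δ:ℂ) * (t:ℂ)))
      = fun t : ℝ => Complex.exp (-(((2*U^2)⁻¹ : ℝ):ℂ) * (t:ℂ)^2 + (Complex.I * Δ) * (t:ℂ) +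
          ((2⁻¹ : ℝ):ℂ)) := by
    funext t
    rw [Complex.ofReal_mul, Complex.ofReal_exp, Complex.ofReal_exp, ← Complex.exp_add,
      ← Complex.exp_add]
    congr 1
    push_cast
    ring
  rw [heq]
  exact integrable_cexp_quadratic (by rwa [Complex.ofReal_re]) _ _

-- Step B: value of the single-frequency integral
lemma gauss_value (U : ℝ) (hU : 0 < U) (Δ : ℝ) :
    ∫ t : ℝ, ((Real.exp 2⁻¹ * Real.exp (-((2*U^2)⁻¹) * t^2) : ℝ) : ℂ) *
      Complex.exp (Complex.I * (Δ:ℂ) * (t:ℂ))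
    = (((Real.exp 2⁻¹ * Real.sqrt (Real.pi / (2*U^2)⁻¹)) *
        Real.exp (-(Δ^2 * (U^2/2))) : ℝ) : ℂ) := by
  have hb : (0:ℝ) < (2*U^2)⁻¹ := by positivity
  have hbC : (0:ℝ) < ((((2*U^2)⁻¹ : ℝ):ℂ)).re := by rwa [Complex.ofReal_re]
  have h1 : (fun t : ℝ => ((Real.exp 2⁻¹ * Real.exp (-((2*U^2)⁻¹) * t^2) : ℝ) : ℂ) *
      Complex.exp (Complex.I * (Δ:ℂ) * (t:ℂ)))
      = fun t : ℝ => ((Real.exp 2⁻¹ : ℝ):ℂ) *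
          (Complex.exp (Complex.I * (Δ:ℂ) * (t:ℂ)) *
            Complex.exp (-(((2*U^2)⁻¹ : ℝ):ℂ) * (t:ℂ)^2)) := by
    funext t
    rw [Complex.ofReal_mul, Complex.ofReal_exp, Complex.ofReal_exp, mul_assoc]
    congr 1
    rw [mul_comm]
    congr 1
    congr 1
    push_cast
    ring
  rw [h1, MeasureTheory.integral_const_mul, fourierIntegral_gaussian hbC (Δ:ℂ)]
  have h2 : ((Real.pi : ℂ) / (((2*U^2)⁻¹ : ℝ):ℂ)) ^ (1/2 : ℂ)
      = ((Real.sqrt (Real.pi / (2*U^2)⁻¹) : ℝ) : ℂ) := by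
    have hpos : (0:ℝ) ≤ Real.pi / (2*U^2)⁻¹ := by positivity
    rw [Real.sqrt_eq_rpow, Complex.ofReal_cpow hpos]
    push_cast
    ring_nf
  have h3 : Complex.exp (-(Δ:ℂ)^2 / (4 * (((2*U^2)⁻¹ : ℝ):ℂ)))
      = ((Real.exp (-(Δ^2 * (U^2/2))) : ℝ) : ℂ) := by
    rw [Complex.ofReal_exp]
    congr 1
    have hU2 : ((U:ℂ))^2 ≠ 0 := by
      simpa using pow_ne_zero 2 (by exact_mod_cast hU.ne' : (U:ℂ) ≠ 0)
    push_cast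
    field_simp
    ring
  rw [h2, h3]
  push_cast
  ring

lemma phi_norm_expand (c : ℝ) (F : Finset ℕ) (a : ℕ → ℝ) (t : ℝ) :
    c * ‖∑ r ∈ F, ((a r : ℝ):ℂ) * Complex.exp (Complex.I * (t:ℂ) * (Real.log r:ℂ))‖^2
    = (∑ r ∈ F, ∑ s ∈ F, ((a r * a s : ℝ):ℂ) *
        ((c:ℂ) * Complex.exp (Complex.I * ((Real.log r - Real.log s : ℝ):ℂ) * (t:ℂ)))).re := by
  set S := ∑ r ∈ F, ((a r : ℝ):ℂ) * Complex.exp (Complex.I * (t:ℂ) * (Real.log r:ℂ)) with hS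
  have h1 : ‖S‖^2 = (S * starRingEnd ℂ S).re := by
    rw [Complex.mul_conj, Complex.ofReal_re, Complex.sq_norm]
  have h2 : S * starRingEnd ℂ S = ∑ r ∈ F, ∑ s ∈ F, ((a r * a s : ℝ):ℂ) *
      Complex.exp (Complex.I * ((Real.log r - Real.log s : ℝ):ℂ) * (t:ℂ)) := by
    rw [hS, map_sum, Finset.sum_mul_sum]
    refine Finset.sum_congr rfl fun r _ => Finset.sum_congr rfl fun s _ => ?_
    rw [map_mul, Complex.conj_ofReal, ← Complex.exp_conj]
    have hc : (starRingEnd ℂ) (Complex.I * (t:ℂ) * (Real.log s:ℂ))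
        = -(Complex.I * (t:ℂ) * (Real.log s:ℂ)) := by
      rw [map_mul, map_mul, Complex.conj_I, Complex.conj_ofReal, Complex.conj_ofReal]
      ring
    rw [hc, mul_mul_mul_comm, ← Complex.exp_add]
    congr 1
    · push_cast; ring
    · congr 1
      push_cast
      ring
  rw [h1, h2, ← Complex.re_ofReal_mul]
  congr 1
  rw [Finset.mul_sum]
  refine Finset.sum_congr rfl fun r _ => ?_
  rw [Finset.mul_sum]
  refine Finset.sum_congr rfl fun s _ => ?_
  ring

lemma expand (U : ℝ) (hU0 : 0 < U) (F : Finset ℕ) (a : ℕ → ℝ) :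
    ∫ t : ℝ, (Real.exp 2⁻¹ * Real.exp (-((2*U^2)⁻¹) * t^2)) *
      ‖∑ r ∈ F, ((a r : ℝ):ℂ) * Complex.exp (Complex.I * (t:ℂ) * (Real.log r:ℂ))‖^2
    = ∑ r ∈ F, ∑ s ∈ F, a r * a s *
        ((Real.exp 2⁻¹ * Real.sqrt (Real.pi / (2*U^2)⁻¹)) *
          Real.exp (-((Real.log r - Real.log s)^2 * (U^2/2)))) := by
  set K := Real.exp 2⁻¹ * Real.sqrt (Real.pi / (2*U^2)⁻¹) with hK
  set g : ℕ → ℕ → ℝ → ℂ := fun r s t =>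
    ((a r * a s : ℝ):ℂ) *
      (((Real.exp 2⁻¹ * Real.exp (-((2*U^2)⁻¹) * t^2) : ℝ):ℂ) *
        Complex.exp (Complex.I * ((Real.log r - Real.log s : ℝ):ℂ) * (t:ℂ))) with hg
  have hgint : ∀ r s : ℕ, Integrable (g r s) := fun r s =>
    (gauss_integrable U hU0 _).const_mul _
  have hGint : Integrable (fun t => ∑ r ∈ F, ∑ s ∈ F, g r s t) := by
    apply integrable_finset_sum
    intro r _
    exact integrable_finset_sum F (fun s _ => hgint r s)
  have h3 : ∀ r s : ℕ, ∫ t, g r s t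
      = ((a r * a s * (K * Real.exp (-((Real.log r - Real.log s)^2 * (U^2/2)))) : ℝ) : ℂ) := by
    intro r s
    calc ∫ t, g r s t
        = ((a r * a s : ℝ):ℂ) * ∫ t, (((Real.exp 2⁻¹ * Real.exp (-((2*U^2)⁻¹) * t^2) : ℝ):ℂ) *
            Complex.exp (Complex.I * ((Real.log r - Real.log s : ℝ):ℂ) * (t:ℂ))) :=
          MeasureTheory.integral_const_mul _ _
      _ = ((a r * a s : ℝ):ℂ) * ((K * Real.exp (-((Real.log r - Real.log s)^2 * (U^2/2))) : ℝ):ℂ) := by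
          rw [gauss_value U hU0 (Real.log r - Real.log s), hK]
      _ = _ := by push_cast; ring
  calc ∫ t : ℝ, (Real.exp 2⁻¹ * Real.exp (-((2*U^2)⁻¹) * t^2)) *
        ‖∑ r ∈ F, ((a r : ℝ):ℂ) * Complex.exp (Complex.I * (t:ℂ) * (Real.log r:ℂ))‖^2
      = ∫ t : ℝ, (∑ r ∈ F, ∑ s ∈ F, g r s t).re := by
        refine integral_congr_ae (Filter.Eventually.of_forall fun t => ?_)
        exact phi_norm_expand _ F a t
    _ = (∫ t : ℝ, ∑ r ∈ F, ∑ s ∈ F, g r s t).re := integral_re hGint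
    _ = (∑ r ∈ F, ∑ s ∈ F, ∫ t, g r s t).re := by
        rw [integral_finset_sum F (fun r _ => integrable_finset_sum F (fun s _ => hgint r s))]
        congr 1
        exact Finset.sum_congr rfl fun r _ => integral_finset_sum F (fun s _ => hgint r s)
    _ = (∑ r ∈ F, ∑ s ∈ F, ((a r * a s * (K * Real.exp (-((Real.log r - Real.log s)^2 * (U^2/2)))) : ℝ) : ℂ)).re := by
        have he : ∑ r ∈ F, ∑ s ∈ F, ∫ t, g r s t
            = ∑ r ∈ F, ∑ s ∈ F, ((a r * a s * (K * Real.exp (-((Real.log r - Real.log s)^2 * (U^2/2)))) : ℝ) : ℂ) :=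
          Finset.sum_congr rfl fun r _ => Finset.sum_congr rfl fun s _ => h3 r s
        rw [he]
    _ = _ := by norm_cast

/-- Mean-value estimate for the Dirichlet polynomial `∑_{R ≤ r < 2R} r^{-1/2+it}`:
there is an absolute constant `C` such that for all `U, R ≥ 1`,
`∫_{-U}^{U} |∑_{R ≤ r < 2R} r^{-1/2+it}|² dt ≤ C (U + R)`. -/
theorem dirichlet_polynomial_mean_value :
    ∃ C : ℝ, 0 < C ∧ ∀ (U R : ℝ), 1 ≤ U → 1 ≤ R →
      (∫ t in Set.Icc (-U) U,
        ‖∑ r ∈ Finset.Ico ⌈R⌉₊ ⌈2 * R⌉₊,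
            (((r : ℝ) ^ (-(1/2) : ℝ) : ℝ) : ℂ) *
              Complex.exp (Complex.I * (t : ℂ) * (Real.log r : ℂ))‖ ^ 2)
        ≤ C * (U + R) := by
  refine ⟨324, by norm_num, fun U R hU hR => ?_⟩
  have hU0 : (0:ℝ) < U := by linarith
  have hR0 : (0:ℝ) < R := by linarith
  have hb : (0:ℝ) < (2*U^2)⁻¹ := by positivity
  set a : ℕ → ℝ := fun r => (r:ℝ) ^ (-(1/2) : ℝ) with ha
  set F : Finset ℕ := Finset.Ico ⌈R⌉₊ ⌈2*R⌉₊ with hF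
  set S : ℝ → ℂ := fun t => ∑ r ∈ F, ((a r : ℝ):ℂ) *
    Complex.exp (Complex.I * (t:ℂ) * (Real.log r:ℂ)) with hSdef
  set φ : ℝ → ℝ := fun t => Real.exp 2⁻¹ * Real.exp (-((2*U^2)⁻¹) * t^2) with hφ
  -- continuity
  have hScont : Continuous S := by
    refine continuous_finset_sum F fun r _ => continuous_const.mul ?_
    exact Complex.continuous_exp.comp
      ((continuous_const.mul Complex.continuous_ofReal).mul continuous_const)
  have hnorm2cont : Continuous fun t => ‖S t‖^2 := (hScont.norm.pow 2)
  have hφcont : Continuous φ := by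
    refine continuous_const.mul (Real.continuous_exp.comp ?_)
    exact (continuous_const.mul (continuous_pow 2))
  -- pointwise bound on S
  set A : ℝ := ∑ r ∈ F, a r with hA
  have hanonneg : ∀ r : ℕ, 0 ≤ a r := fun r => Real.rpow_nonneg (Nat.cast_nonneg r) _
  have hSbound : ∀ t : ℝ, ‖S t‖^2 ≤ A^2 := by
    intro t
    have h1 : ‖S t‖ ≤ A := by
      refine le_trans (norm_sum_le F _) ?_
      refine Finset.sum_le_sum fun r _ => ?_
      rw [norm_mul, Complex.norm_real, Real.norm_eq_abs, _root_.abs_of_nonneg (hanonneg r)]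
      have harg : Complex.I * (t:ℂ) * (Real.log r:ℂ) = ((t * Real.log r : ℝ) : ℂ) * Complex.I := by
        push_cast; ring
      rw [harg, Complex.norm_exp_ofReal_mul_I, mul_one]
    exact pow_le_pow_left₀ (norm_nonneg _) h1 2
  -- integrability of φ * ‖S‖² on ℝ
  have hφint : Integrable (fun t : ℝ => Real.exp (-((2*U^2)⁻¹) * t^2)) :=
    integrable_exp_neg_mul_sq hb
  have hφnn : ∀ t : ℝ, 0 ≤ φ t := fun t => by simp only [hφ]; positivity
  have hint : Integrable (fun t => φ t * ‖S t‖^2) := by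
    refine Integrable.mono' ((hφint.const_mul (Real.exp 2⁻¹ * A^2))) ?_ ?_
    · exact ((hφcont.mul hnorm2cont)).aestronglyMeasurable
    · refine Filter.Eventually.of_forall fun t => ?_
      rw [Real.norm_eq_abs, _root_.abs_of_nonneg (mul_nonneg (hφnn t) (by positivity))]
      have h2 : ‖S t‖^2 ≤ A^2 := hSbound t
      calc φ t * ‖S t‖^2 ≤ φ t * A^2 :=
            mul_le_mul_of_nonneg_left h2 (hφnn t)
        _ = Real.exp 2⁻¹ * A^2 * Real.exp (-((2*U^2)⁻¹) * t^2) := by simp only [hφ]; ring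
  -- step 1: majorize on Icc
  have hstep1 : (∫ t in Set.Icc (-U) U, ‖S t‖^2) ≤ ∫ t in Set.Icc (-U) U, φ t * ‖S t‖^2 := by
    refine setIntegral_mono_on (hnorm2cont.integrableOn_Icc) ((hφcont.mul hnorm2cont).integrableOn_Icc)
      measurableSet_Icc fun t ht => ?_
    have h1 : 1 ≤ φ t := by
      simp only [hφ]
      rw [← Real.exp_add]
      refine Real.one_le_exp ?_
      obtain ⟨h2, h3⟩ := ht
      have ht2 : t^2 ≤ U^2 := sq_le_sq' h2 h3
      have : (2*U^2)⁻¹ * t^2 ≤ (2*U^2)⁻¹ * U^2 := mul_le_mul_of_nonneg_left ht2 (le_of_lt hb)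
      have he : (2*U^2)⁻¹ * U^2 = 2⁻¹ := by field_simp
      nlinarith
    nlinarith [sq_nonneg ‖S t‖, norm_nonneg (S t)]
  -- step 2: extend to ℝ
  have hstep2 : (∫ t in Set.Icc (-U) U, φ t * ‖S t‖^2) ≤ ∫ t : ℝ, φ t * ‖S t‖^2 := by
    refine setIntegral_le_integral hint (Filter.Eventually.of_forall fun t => ?_)
    have := hφnn t
    positivity
  -- step 3: expansion
  have hstep3 : (∫ t : ℝ, φ t * ‖S t‖^2)
      = ∑ r ∈ F, ∑ s ∈ F, a r * a s *
        ((Real.exp 2⁻¹ * Real.sqrt (Real.pi / (2*U^2)⁻¹)) *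
          Real.exp (-((Real.log r - Real.log s)^2 * (U^2/2)))) := expand U hU0 F a
  -- step 4: K bound
  set K : ℝ := Real.exp 2⁻¹ * Real.sqrt (Real.pi / (2*U^2)⁻¹) with hK
  have hK9 : K ≤ 9 * U := by
    have h1 : Real.pi / (2*U^2)⁻¹ = Real.pi * (2*U^2) := by field_simp
    have h2 : Real.pi * (2*U^2) ≤ (3*U)^2 := by nlinarith [Real.pi_le_four, sq_nonneg U]
    have h3 : Real.sqrt (Real.pi / (2*U^2)⁻¹) ≤ 3*U := by
      rw [h1]
      calc Real.sqrt (Real.pi * (2*U^2)) ≤ Real.sqrt ((3*U)^2) := Real.sqrt_le_sqrt h2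
        _ = 3*U := Real.sqrt_sq (by positivity)
    have h4 : Real.exp 2⁻¹ ≤ 3 := by
      calc Real.exp 2⁻¹ ≤ Real.exp 1 := Real.exp_le_exp.2 (by norm_num)
        _ ≤ 3 := by linarith [Real.exp_one_lt_d9]
    calc K ≤ 3 * (3*U) := by
          refine mul_le_mul h4 h3 (Real.sqrt_nonneg _) (by norm_num)
      _ = 9 * U := by ring
  have hKnonneg : 0 ≤ K := by positivity
  -- step 5: counting
  have hsum : ∑ r ∈ F, ∑ s ∈ F, a r * a s *
      (K * Real.exp (-((Real.log r - Real.log s)^2 * (U^2/2))))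
      = K * ∑ r ∈ F, ∑ s ∈ F, a r * a s *
          Real.exp (-((Real.log r - Real.log s)^2 * (U^2/2))) := by
    rw [Finset.mul_sum]
    refine Finset.sum_congr rfl fun r _ => ?_
    rw [Finset.mul_sum]
    exact Finset.sum_congr rfl fun s _ => by ring
  have hcount : ∑ r ∈ F, ∑ s ∈ F, a r * a s *
      Real.exp (-((Real.log r - Real.log s)^2 * (U^2/2))) ≤ 6 + 36 * (R / U) :=
    counting U R hU hR
  have hcntnonneg : 0 ≤ ∑ r ∈ F, ∑ s ∈ F, a r * a s *
      Real.exp (-((Real.log r - Real.log s)^2 * (U^2/2))) := by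
    refine Finset.sum_nonneg fun r _ => Finset.sum_nonneg fun s _ => ?_
    have := hanonneg r; have := hanonneg s
    positivity
  have hfinal : K * (∑ r ∈ F, ∑ s ∈ F, a r * a s *
      Real.exp (-((Real.log r - Real.log s)^2 * (U^2/2)))) ≤ 9*U * (6 + 36 * (R/U)) :=
    mul_le_mul hK9 hcount hcntnonneg (by positivity)
  have harith : 9*U * (6 + 36 * (R/U)) ≤ 324 * (U + R) := by
    have : 9*U * (6 + 36 * (R/U)) = 54*U + 324*R := by field_simp; ring
    rw [this]
    linarith
  show (∫ t in Set.Icc (-U) U, ‖S t‖^2) ≤ 324 * (U + R)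
  calc (∫ t in Set.Icc (-U) U, ‖S t‖^2)
      ≤ ∫ t in Set.Icc (-U) U, φ t * ‖S t‖^2 := hstep1
    _ ≤ ∫ t : ℝ, φ t * ‖S t‖^2 := hstep2
    _ = ∑ r ∈ F, ∑ s ∈ F, a r * a s *
        (K * Real.exp (-((Real.log r - Real.log s)^2 * (U^2/2)))) := hstep3
    _ = K * ∑ r ∈ F, ∑ s ∈ F, a r * a s *
        Real.exp (-((Real.log r - Real.log s)^2 * (U^2/2))) := hsum
    _ ≤ 9*U * (6 + 36 * (R/U)) := hfinal
    _ ≤ 324 * (U + R) := harith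
end

section
/- There is an absolute constant C such that the following holds. Let K ≥ 1, let a : ℕ → ℂ satisfy the Rankin–Selberg bound with constant K, let U, R, N ≥ 1 be real numbers, and let λ : ℝ → ℂ be a measurable function with |λ(t)| ≤ 1 for all t. Then |∫_{−U}^{U} λ(t) · (∑_{R ≤ r < 2R} r^{−1/2−it}) · (∑_{N ≤ n < 2N} a(n) n^{−1/2+it}) dt| ≤ C·√K·√((R + U)(N + U)). -/
open MeasureTheory Complex

/-- A sequence `a : ℕ → ℂ` satisfies the Rankin–Selberg bound with constant `K ≥ 1` if
`∑_{n ≤ X} |a(n)|² ≤ K X` for every real `X ≥ 1`. -/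
def RankinSelbergBound (a : ℕ → ℂ) (K : ℝ) : Prop :=
  ∀ X : ℝ, 1 ≤ X → ∑ n ∈ Finset.Icc 1 ⌊X⌋₊, ‖a n‖ ^ 2 ≤ K * X

open intervalIntegral Finset

noncomputable def ker (U φ : ℝ) : ℂ :=
  ∫ t in (-(2*U))..(2*U), ((2 - |t|/U : ℝ) : ℂ) * Complex.exp (Complex.I * t * φ)

lemma ker_cont (U φ : ℝ) :
    Continuous fun t : ℝ => ((2 - |t|/U : ℝ) : ℂ) * Complex.exp (Complex.I * t * φ) := by
  apply Continuous.mul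
  · exact Complex.continuous_ofReal.comp ((continuous_const.sub (continuous_abs.div_const U)))
  · exact Complex.continuous_exp.comp (by continuity)

lemma ker_norm_le (U : ℝ) (hU : 0 < U) (φ : ℝ) : ‖ker U φ‖ ≤ 8 * U := by
  have h := intervalIntegral.norm_integral_le_of_norm_le_const (C := 2)
    (f := fun t : ℝ => ((2 - |t|/U : ℝ) : ℂ) * Complex.exp (Complex.I * t * φ))
    (a := -(2*U)) (b := 2*U) ?_
  · calc ‖ker U φ‖ ≤ 2 * |2*U - -(2*U)| := h
      _ = 8 * U := by rw [abs_of_pos (by linarith)]; ring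
  · intro t ht
    rw [Set.uIoc_of_le (by linarith)] at ht
    have ht1 : |t| ≤ 2*U := abs_le.2 ⟨le_of_lt ht.1, ht.2⟩
    rw [norm_mul]
    have : ‖Complex.exp (Complex.I * t * φ)‖ = 1 := by
      have : Complex.I * t * φ = (t*φ : ℝ) * Complex.I := by push_cast; ring
      rw [this, Complex.norm_exp_ofReal_mul_I]
    rw [this, mul_one, Complex.norm_real]
    rw [Real.norm_eq_abs, abs_le]
    constructor
    · have : |t|/U ≤ 2 := by rw [div_le_iff₀ hU]; linarith
      nlinarith [abs_nonneg t]
    · have : 0 ≤ |t|/U := div_nonneg (abs_nonneg t) hU.le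
      linarith

lemma ker_eq (U : ℝ) (hU : 0 < U) (φ : ℝ) (hφ : φ ≠ 0) :
    ker U φ = (2 - Complex.exp ((2*U*φ : ℝ) * Complex.I)
        - Complex.exp ((-(2*U*φ) : ℝ) * Complex.I)) * ((U : ℂ) * (φ:ℂ)^2)⁻¹ := by
  have hUφ : (Complex.I * φ) ≠ 0 := by
    simp [Complex.I_ne_zero, Complex.ofReal_eq_zero, hφ]
  have hUφ2 : ((U:ℂ) * (φ:ℂ)^2) ≠ 0 := by
    simp [Complex.ofReal_eq_zero, hU.ne', hφ, pow_eq_zero_iff]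
  -- derivative of the exponential
  have hg : ∀ t : ℝ, HasDerivAt (fun s : ℝ => Complex.exp (Complex.I * s * φ))
      (Complex.I * φ * Complex.exp (Complex.I * t * φ)) t := by
    intro t
    have h1 : HasDerivAt (fun z : ℂ => Complex.exp (Complex.I * z * φ))
        (Complex.exp (Complex.I * (t:ℂ) * φ) * (Complex.I * φ)) (t : ℂ) := by
      have h0 : HasDerivAt (fun z : ℂ => Complex.I * z * φ) (Complex.I * φ) (t : ℂ) := by
        simpa using (((hasDerivAt_id (t:ℂ)).const_mul Complex.I).mul_const (φ:ℂ))
      simpa using h0.cexp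
    have := h1.comp_ofReal
    simpa [mul_comm] using this
  -- antiderivative on [0, 2U]
  have hF : ∀ t : ℝ, HasDerivAt (fun s : ℝ =>
        (2 - (s:ℂ)/U) * Complex.exp (Complex.I * s * φ) * (Complex.I * φ)⁻¹
          - Complex.exp (Complex.I * s * φ) * ((U:ℂ) * (φ:ℂ)^2)⁻¹)
      ((2 - (t:ℂ)/U) * Complex.exp (Complex.I * t * φ)) t := by
    intro t
    have hh : HasDerivAt (fun s : ℝ => (2 - (s:ℂ)/U)) (-(1/(U:ℂ))) t := by
      have : HasDerivAt (fun s : ℝ => (s:ℂ)) 1 t := Complex.ofRealCLM.hasDerivAt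
      simpa using (this.div_const (U:ℂ)).const_sub 2
    have := ((hh.mul (hg t)).mul_const ((Complex.I * φ)⁻¹)).sub
      ((hg t).mul_const (((U:ℂ) * (φ:ℂ)^2)⁻¹))
    convert this using 1
    any_goals rfl
    have hU' : (U:ℂ) ≠ 0 := by simpa using hU.ne'
    field_simp
    ring_nf
    rw [Complex.I_sq]
    simp [hφ]
  -- antiderivative on [-2U, 0]
  have hF2 : ∀ t : ℝ, HasDerivAt (fun s : ℝ =>
        (2 + (s:ℂ)/U) * Complex.exp (Complex.I * s * φ) * (Complex.I * φ)⁻¹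
          + Complex.exp (Complex.I * s * φ) * ((U:ℂ) * (φ:ℂ)^2)⁻¹)
      ((2 + (t:ℂ)/U) * Complex.exp (Complex.I * t * φ)) t := by
    intro t
    have hh : HasDerivAt (fun s : ℝ => (2 + (s:ℂ)/U)) (1/(U:ℂ)) t := by
      have : HasDerivAt (fun s : ℝ => (s:ℂ)) 1 t := Complex.ofRealCLM.hasDerivAt
      simpa using ((this.div_const (U:ℂ)).const_add 2)
    have := ((hh.mul (hg t)).mul_const ((Complex.I * φ)⁻¹)).add
      ((hg t).mul_const (((U:ℂ) * (φ:ℂ)^2)⁻¹))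
    convert this using 1
    any_goals rfl
    have hU' : (U:ℂ) ≠ 0 := by simpa using hU.ne'
    field_simp
    ring_nf
    rw [Complex.I_sq]
    simp [hφ]
  have hcont1 : Continuous fun t : ℝ => (2 - (t:ℂ)/U) * Complex.exp (Complex.I * t * φ) := by
    apply Continuous.mul
    · exact continuous_const.sub (Complex.continuous_ofReal.div_const _)
    · exact Complex.continuous_exp.comp (by continuity)
  have hcont2 : Continuous fun t : ℝ => (2 + (t:ℂ)/U) * Complex.exp (Complex.I * t * φ) := by
    apply Continuous.mul
    · exact continuous_const.add (Complex.continuous_ofReal.div_const _)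
    · exact Complex.continuous_exp.comp (by continuity)
  have hsplit : ker U φ
      = (∫ t in (-(2*U))..(0:ℝ), ((2 - |t|/U : ℝ) : ℂ) * Complex.exp (Complex.I * t * φ))
        + ∫ t in (0:ℝ)..(2*U), ((2 - |t|/U : ℝ) : ℂ) * Complex.exp (Complex.I * t * φ) := by
    rw [ker, ← intervalIntegral.integral_add_adjacent_intervals
      ((ker_cont U φ).intervalIntegrable _ _) ((ker_cont U φ).intervalIntegrable _ _)]
  have hr : (∫ t in (0:ℝ)..(2*U), ((2 - |t|/U : ℝ) : ℂ) * Complex.exp (Complex.I * t * φ))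
      = ∫ t in (0:ℝ)..(2*U), (2 - (t:ℂ)/U) * Complex.exp (Complex.I * t * φ) := by
    apply intervalIntegral.integral_congr
    intro t ht
    rw [Set.uIcc_of_le (by linarith)] at ht
    simp only []
    rw [_root_.abs_of_nonneg ht.1]
    push_cast
    ring
  have hl : (∫ t in (-(2*U))..(0:ℝ), ((2 - |t|/U : ℝ) : ℂ) * Complex.exp (Complex.I * t * φ))
      = ∫ t in (-(2*U))..(0:ℝ), (2 + (t:ℂ)/U) * Complex.exp (Complex.I * t * φ) := by
    apply intervalIntegral.integral_congr
    intro t ht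
    rw [Set.uIcc_of_le (by linarith)] at ht
    simp only []
    rw [_root_.abs_of_nonpos ht.2]
    push_cast
    ring
  rw [hsplit, hr, hl,
    intervalIntegral.integral_eq_sub_of_hasDerivAt (fun t _ => hF t)
      (hcont1.intervalIntegrable _ _),
    intervalIntegral.integral_eq_sub_of_hasDerivAt (fun t _ => hF2 t)
      (hcont2.intervalIntegrable _ _)]
  have hU' : (U:ℂ) ≠ 0 := by simpa using hU.ne'
  have he1 : Complex.I * ((2*U:ℝ):ℂ) * φ = ((2*U*φ:ℝ):ℂ) * Complex.I := by push_cast; ring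
  have he2 : Complex.I * ((-(2*U):ℝ):ℂ) * φ = ((-(2*U*φ):ℝ):ℂ) * Complex.I := by push_cast; ring
  rw [he1, he2]
  push_cast
  simp only [Complex.ofReal_zero, mul_zero, zero_mul, Complex.exp_zero, zero_div]
  field_simp
  ring

lemma ker_norm_le_decay (U : ℝ) (hU : 0 < U) (φ : ℝ) (hφ : φ ≠ 0) :
    ‖ker U φ‖ ≤ 4 / (U * φ^2) := by
  rw [ker_eq U hU φ hφ, norm_mul]
  have h2 : 0 < U * φ^2 := by positivity
  have hn : ‖((U : ℂ) * (φ:ℂ)^2)⁻¹‖ = (U * φ^2)⁻¹ := by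
    rw [norm_inv]
    congr 1
    rw [← Complex.ofReal_pow, ← Complex.ofReal_mul, Complex.norm_real,
      Real.norm_eq_abs, abs_of_pos h2]
  rw [hn]
  have hb : ‖(2 : ℂ) - Complex.exp ((2*U*φ : ℝ) * Complex.I)
      - Complex.exp ((-(2*U*φ) : ℝ) * Complex.I)‖ ≤ 4 := by
    calc ‖(2 : ℂ) - Complex.exp ((2*U*φ : ℝ) * Complex.I)
        - Complex.exp ((-(2*U*φ) : ℝ) * Complex.I)‖
        ≤ ‖(2 : ℂ) - Complex.exp ((2*U*φ : ℝ) * Complex.I)‖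
          + ‖Complex.exp ((-(2*U*φ) : ℝ) * Complex.I)‖ := norm_sub_le _ _
      _ ≤ (‖(2 : ℂ)‖ + ‖Complex.exp ((2*U*φ : ℝ) * Complex.I)‖)
          + ‖Complex.exp ((-(2*U*φ) : ℝ) * Complex.I)‖ := by
            gcongr; exact norm_sub_le _ _
      _ = 4 := by
          rw [Complex.norm_exp_ofReal_mul_I, Complex.norm_exp_ofReal_mul_I]
          simp
          norm_num
  calc ‖(2 : ℂ) - Complex.exp ((2*U*φ : ℝ) * Complex.I)
      - Complex.exp ((-(2*U*φ) : ℝ) * Complex.I)‖ * (U * φ^2)⁻¹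
      ≤ 4 * (U * φ^2)⁻¹ := by gcongr
    _ = 4 / (U * φ^2) := by rw [div_eq_mul_inv]

lemma tail_sum_s3 (a : ℕ) (ha : 1 ≤ a) (b : ℕ) :
    ∑ k ∈ Finset.Ioc a b, (1:ℝ)/(k:ℝ)^2 ≤ 1/(a:ℝ) := by
  rcases le_or_gt b a with hba | hab
  · rw [Finset.Ioc_eq_empty (by omega)]
    simp
  · have key : ∀ b : ℕ, a ≤ b → ∑ k ∈ Finset.Ioc a b, (1:ℝ)/(k:ℝ)^2 ≤ 1/(a:ℝ) - 1/(b:ℝ) := by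
      intro b
      induction b with
      | zero => intro h; interval_cases a <;> simp
      | succ n ih =>
        intro h
        rcases le_or_gt a n with h' | h'
        · rw [Finset.sum_Ioc_succ_top h']
          have h2 := ih h'
          have hn : (1:ℝ) ≤ n := by exact_mod_cast le_trans ha h'
          have hb : (1:ℝ)/((n:ℝ)+1)^2 ≤ 1/(n:ℝ) - 1/((n:ℝ)+1) := by
            rw [div_sub_div _ _ (by linarith) (by linarith)]
            rw [div_le_div_iff₀ (by positivity) (by positivity)]
            ring_nf
            nlinarith
          push_cast
          linarith
        · have : a = n + 1 := by omega
          subst this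
          simp
    have hb1 : 1 ≤ b := le_trans ha hab.le
    have hb : (0:ℝ) < b := by exact_mod_cast Nat.lt_of_lt_of_le Nat.zero_lt_one hb1
    have h0 : (0:ℝ) ≤ 1/(b:ℝ) := by positivity
    linarith [key b hab.le]

lemma block_sum (U M : ℝ) (hU : 1 ≤ U) (hM : 1 ≤ M) (D : ℕ) :
    ∑ k ∈ Finset.Icc 1 D, min (8*U) (16*M^2/(U*(k:ℝ)^2)) ≤ 32*(U+M) := by
  have hU0 : 0 < U := by linarith
  have hM0 : 0 < M := by linarith
  set k₀ := ⌈2*M/U⌉₊ with hk₀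
  have hk₀1 : 1 ≤ k₀ := Nat.one_le_iff_ne_zero.2 (by
    simp only [hk₀, ne_eq, Nat.ceil_eq_zero, not_le]
    positivity)
  have hk₀u : (k₀:ℝ) ≤ 2*M/U + 1 := (Nat.ceil_lt_add_one (by positivity)).le
  have hk₀l : 2*M/U ≤ (k₀:ℝ) := Nat.le_ceil _
  rw [← Finset.sum_filter_add_sum_filter_not (Finset.Icc 1 D) (fun k => k ≤ k₀)]
  have h1 : ∑ k ∈ (Finset.Icc 1 D).filter (fun k => k ≤ k₀),
      min (8*U) (16*M^2/(U*(k:ℝ)^2)) ≤ (k₀:ℝ) * (8*U) := by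
    calc ∑ k ∈ (Finset.Icc 1 D).filter (fun k => k ≤ k₀),
        min (8*U) (16*M^2/(U*(k:ℝ)^2))
        ≤ ∑ k ∈ (Finset.Icc 1 D).filter (fun k => k ≤ k₀), (8*U) :=
          Finset.sum_le_sum (fun k _ => min_le_left _ _)
      _ = ((Finset.Icc 1 D).filter (fun k => k ≤ k₀)).card * (8*U) := by
          rw [Finset.sum_const, nsmul_eq_mul]
      _ ≤ (k₀:ℝ) * (8*U) := by
          have hsub : (Finset.Icc 1 D).filter (fun k => k ≤ k₀) ⊆ Finset.Icc 1 k₀ := by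
            intro k hk
            simp only [Finset.mem_filter, Finset.mem_Icc] at hk ⊢
            exact ⟨hk.1.1, hk.2⟩
          have := Finset.card_le_card hsub
          rw [Nat.card_Icc] at this
          have : ((Finset.Icc 1 D).filter (fun k => k ≤ k₀)).card ≤ k₀ := by omega
          have hc : (((Finset.Icc 1 D).filter (fun k => k ≤ k₀)).card : ℝ) ≤ (k₀:ℝ) := by
            exact_mod_cast this
          nlinarith
  have h2 : ∑ k ∈ (Finset.Icc 1 D).filter (fun k => ¬ k ≤ k₀),
      min (8*U) (16*M^2/(U*(k:ℝ)^2)) ≤ 16*M^2/U * (1/(k₀:ℝ)) := by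
    calc ∑ k ∈ (Finset.Icc 1 D).filter (fun k => ¬ k ≤ k₀),
        min (8*U) (16*M^2/(U*(k:ℝ)^2))
        ≤ ∑ k ∈ (Finset.Icc 1 D).filter (fun k => ¬ k ≤ k₀), 16*M^2/(U*(k:ℝ)^2) :=
          Finset.sum_le_sum (fun k _ => min_le_right _ _)
      _ ≤ ∑ k ∈ Finset.Ioc k₀ D, 16*M^2/(U*(k:ℝ)^2) := by
          apply Finset.sum_le_sum_of_subset_of_nonneg
          · intro k hk
            simp only [Finset.mem_filter, Finset.mem_Icc, not_le] at hk
            simp only [Finset.mem_Ioc]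
            exact ⟨hk.2, hk.1.2⟩
          · intro k _ _
            have hk0 : (0:ℝ) < k ∨ (k:ℝ) = 0 := by
              rcases Nat.eq_zero_or_pos k with h | h
              · right; exact_mod_cast h
              · left; exact_mod_cast h
            rcases hk0 with h | h
            · positivity
            · rw [h]; simp
      _ = 16*M^2/U * ∑ k ∈ Finset.Ioc k₀ D, (1:ℝ)/(k:ℝ)^2 := by
          rw [Finset.mul_sum]
          apply Finset.sum_congr rfl
          intro k _
          field_simp
      _ ≤ 16*M^2/U * (1/(k₀:ℝ)) := by
          apply mul_le_mul_of_nonneg_left (tail_sum_s3 k₀ hk₀1 D) (by positivity)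
  have hk₀r : (0:ℝ) < k₀ := by exact_mod_cast hk₀1
  have h3 : 16*M^2/U * (1/(k₀:ℝ)) ≤ 8*M := by
    rw [mul_one_div, div_le_iff₀ hk₀r]
    rw [div_mul_eq_mul_div, div_le_iff₀ hU0] at *
    nlinarith
  have h4 : (k₀:ℝ) * (8*U) ≤ 16*M + 8*U := by
    have hq : (2*M/U)*U = 2*M := by field_simp
    nlinarith [mul_le_mul_of_nonneg_right hk₀u (by positivity : (0:ℝ) ≤ 8*U)]
  linarith

-- log gap for ordered pair
lemma log_gap_lt (M : ℝ) (hM : 1 ≤ M) (p q : ℕ)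
    (hp : p ∈ Finset.Ico ⌈M⌉₊ ⌈2*M⌉₊) (hq : q ∈ Finset.Ico ⌈M⌉₊ ⌈2*M⌉₊)
    (hpq : p < q) : ((q:ℝ) - p)/(2*M) ≤ Real.log q - Real.log p := by
  simp only [Finset.mem_Ico] at hp hq
  have hM0 : 0 < M := by linarith
  have hp1 : 1 ≤ p := le_trans (Nat.one_le_ceil_iff.2 hM0) hp.1
  have hpr : (1:ℝ) ≤ p := by exact_mod_cast hp1
  have hqr : (1:ℝ) ≤ q := by exact_mod_cast le_trans hp1 hpq.le
  have hq2M : (q:ℝ) ≤ 2*M := by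
    have h1 : (q:ℝ) + 1 ≤ (⌈2*M⌉₊ : ℝ) := by exact_mod_cast hq.2
    have h2 : (⌈2*M⌉₊ : ℝ) < 2*M + 1 := Nat.ceil_lt_add_one (by positivity)
    linarith
  have hlog : Real.log ((p:ℝ)/(q:ℝ)) ≤ (p:ℝ)/(q:ℝ) - 1 :=
    Real.log_le_sub_one_of_pos (by positivity)
  rw [Real.log_div (by linarith) (by linarith)] at hlog
  have h3 : 1 - (p:ℝ)/q ≤ Real.log q - Real.log p := by linarith
  have h4 : ((q:ℝ) - p)/q ≤ Real.log q - Real.log p := by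
    have : ((q:ℝ) - p)/q = 1 - (p:ℝ)/q := by field_simp
    linarith [this ▸ h3]
  calc ((q:ℝ) - p)/(2*M) ≤ ((q:ℝ) - p)/q := by
        apply div_le_div_of_nonneg_left _ (by linarith) hq2M
        · have : (p:ℝ) < q := by exact_mod_cast hpq
          linarith
    _ ≤ Real.log q - Real.log p := h4

lemma log_gap_sq (M : ℝ) (hM : 1 ≤ M) (p q : ℕ)
    (hp : p ∈ Finset.Ico ⌈M⌉₊ ⌈2*M⌉₊) (hq : q ∈ Finset.Ico ⌈M⌉₊ ⌈2*M⌉₊)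
    (hpq : p ≠ q) : (((q:ℝ) - p)/(2*M))^2 ≤ (Real.log q - Real.log p)^2 := by
  have hM0 : 0 < M := by linarith
  rcases lt_or_gt_of_ne hpq with h | h
  · have h1 := log_gap_lt M hM p q hp hq h
    have hpos : (0:ℝ) < ((q:ℝ) - p)/(2*M) := by
      apply div_pos _ (by linarith)
      have : (p:ℝ) < q := by exact_mod_cast h
      linarith
    nlinarith
  · have h1 := log_gap_lt M hM q p hq hp h
    have hpos : (0:ℝ) < ((p:ℝ) - q)/(2*M) := by
      apply div_pos _ (by linarith)
      have : (q:ℝ) < p := by exact_mod_cast h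
      linarith
    have e1 : (((q:ℝ) - p)/(2*M))^2 = (((p:ℝ) - q)/(2*M))^2 := by ring
    have e2 : (Real.log q - Real.log p)^2 = (Real.log p - Real.log q)^2 := by ring
    rw [e1, e2]
    nlinarith

lemma row_sum (U M : ℝ) (hU : 1 ≤ U) (hM : 1 ≤ M) (p : ℕ)
    (hp : p ∈ Finset.Ico ⌈M⌉₊ ⌈2*M⌉₊) (h : ℕ → ℝ)
    (hb1 : ∀ q, h q ≤ 8*U)
    (hb2 : ∀ q ∈ Finset.Ico ⌈M⌉₊ ⌈2*M⌉₊, q ≠ p → h q ≤ 16*M^2/(U*((q:ℝ)-(p:ℝ))^2)) :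
    ∑ q ∈ Finset.Ico ⌈M⌉₊ ⌈2*M⌉₊, h q ≤ 72*(U+M) := by
  have hU0 : 0 < U := by linarith
  have hM0 : 0 < M := by linarith
  set s := Finset.Ico ⌈M⌉₊ ⌈2*M⌉₊ with hs
  set F : ℕ → ℝ := fun k => min (8*U) (16*M^2/(U*(k:ℝ)^2)) with hF
  have hFnonneg : ∀ k, 1 ≤ k → 0 ≤ F k := by
    intro k hk
    apply le_min (by positivity)
    have : (0:ℝ) < k := by exact_mod_cast hk
    positivity
  -- h q ≤ F (dist) for q ≠ p in s
  have hdist : ∀ q ∈ s, q ≠ p → h q ≤ F (max q p - min q p) := by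
    intro q hq hqp
    apply le_min (hb1 q)
    have key : ((max q p - min q p : ℕ) : ℝ)^2 = ((q:ℝ)-(p:ℝ))^2 := by
      rcases le_or_gt q p with hle | hlt
      · rw [max_eq_right hle, min_eq_left hle, Nat.cast_sub hle]
        ring
      · rw [max_eq_left hlt.le, min_eq_right hlt.le, Nat.cast_sub hlt.le]
    rw [key]
    exact hb2 q hq hqp
  rw [← Finset.add_sum_erase s h hp]
  have herase : ∑ q ∈ s.erase p, h q ≤ 64*(U+M) := by
    have hsplit := Finset.sum_filter_add_sum_filter_not (s.erase p) (fun q => q < p) h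
    rw [← hsplit]
    have hside : ∀ (t : Finset ℕ) (e : ℕ → ℕ),
        (∀ q ∈ t, h q ≤ F (e q)) → (∀ q ∈ t, 1 ≤ e q ∧ e q ≤ ⌈2*M⌉₊) →
        (∀ q₁ ∈ t, ∀ q₂ ∈ t, e q₁ = e q₂ → q₁ = q₂) →
        ∑ q ∈ t, h q ≤ 32*(U+M) := by
      intro t e hbound hrange hinj
      calc ∑ q ∈ t, h q ≤ ∑ q ∈ t, F (e q) := Finset.sum_le_sum hbound
        _ = ∑ k ∈ t.image e, F k := (Finset.sum_image hinj).symm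
        _ ≤ ∑ k ∈ Finset.Icc 1 ⌈2*M⌉₊, F k := by
            apply Finset.sum_le_sum_of_subset_of_nonneg
            · intro k hk
              rw [Finset.mem_image] at hk
              obtain ⟨q, hq, rfl⟩ := hk
              rw [Finset.mem_Icc]
              exact hrange q hq
            · intro k hk _
              rw [Finset.mem_Icc] at hk
              exact hFnonneg k hk.1
        _ ≤ 32*(U+M) := block_sum U M hU hM _
    have hppos : 1 ≤ p := by
      rw [hs, Finset.mem_Ico] at hp
      exact le_trans (Nat.one_le_ceil_iff.2 hM0) hp.1
    have hplt : p < ⌈2*M⌉₊ := by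
      rw [hs, Finset.mem_Ico] at hp
      exact hp.2
    have h1 : ∑ q ∈ (s.erase p).filter (fun q => q < p), h q ≤ 32*(U+M) := by
      apply hside _ (fun q => p - q)
      · intro q hq
        rw [Finset.mem_filter, Finset.mem_erase] at hq
        obtain ⟨⟨hne, hqs⟩, hlt⟩ := hq
        have heq : max q p - min q p = p - q := by omega
        rw [← heq]
        exact hdist q hqs hne
      · intro q hq
        rw [Finset.mem_filter, Finset.mem_erase] at hq
        obtain ⟨⟨hne, hqs⟩, hlt⟩ := hq
        exact ⟨by omega, by omega⟩
      · intro q₁ h₁ q₂ h₂ he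
        rw [Finset.mem_filter, Finset.mem_erase] at h₁ h₂
        have l₁ := h₁.2
        have l₂ := h₂.2
        omega
    have h2 : ∑ q ∈ (s.erase p).filter (fun q => ¬ q < p), h q ≤ 32*(U+M) := by
      apply hside _ (fun q => q - p)
      · intro q hq
        rw [Finset.mem_filter, Finset.mem_erase] at hq
        obtain ⟨⟨hne, hqs⟩, hlt⟩ := hq
        have heq : max q p - min q p = q - p := by omega
        rw [← heq]
        exact hdist q hqs hne
      · intro q hq
        rw [Finset.mem_filter, Finset.mem_erase] at hq
        obtain ⟨⟨hne, hqs⟩, hlt⟩ := hq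
        rw [hs, Finset.mem_Ico] at hqs
        exact ⟨by omega, by omega⟩
      · intro q₁ h₁ q₂ h₂ he
        rw [Finset.mem_filter, Finset.mem_erase] at h₁ h₂
        have l₁ := h₁.2
        have l₂ := h₂.2
        have m₁ := h₁.1.1
        have m₂ := h₂.1.1
        omega
    linarith
  have := hb1 p
  linarith

lemma meanvalue (U M : ℝ) (hU : 1 ≤ U) (hM : 1 ≤ M) (c : ℕ → ℂ) :
    ∫ t in Set.Icc (-U) U,
        ‖∑ n ∈ Finset.Ico ⌈M⌉₊ ⌈2*M⌉₊, c n * Complex.exp (Complex.I * t * Real.log n)‖^2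
      ≤ 72*(U+M) * ∑ n ∈ Finset.Ico ⌈M⌉₊ ⌈2*M⌉₊, ‖c n‖^2 := by
  have hU0 : 0 < U := by linarith
  have hM0 : 0 < M := by linarith
  set s := Finset.Ico ⌈M⌉₊ ⌈2*M⌉₊ with hs
  set S : ℝ → ℂ := fun t => ∑ n ∈ s, c n * Complex.exp (Complex.I * t * Real.log n) with hS
  have hScont : Continuous S := by
    apply continuous_finset_sum
    intro n _
    exact continuous_const.mul (Complex.continuous_exp.comp (by continuity))
  have hnorm : ∀ z : ℂ, ‖z‖^2 = (z * (starRingEnd ℂ) z).re := by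
    intro z
    rw [Complex.mul_conj]
    simp [Complex.sq_norm]
  -- Step A
  have stepA : ∫ t in Set.Icc (-U) U, ‖S t‖^2
      ≤ ∫ t in Set.Icc (-(2*U)) (2*U), (2 - |t|/U) * ‖S t‖^2 := by
    have hgint : IntegrableOn (fun t => (2 - |t|/U) * ‖S t‖^2) (Set.Icc (-(2*U)) (2*U)) := by
      apply Continuous.integrableOn_Icc
      exact ((continuous_const.sub (_root_.continuous_abs.div_const U)).mul
        ((hScont.norm).pow 2))
    calc ∫ t in Set.Icc (-U) U, ‖S t‖^2
        ≤ ∫ t in Set.Icc (-U) U, (2 - |t|/U) * ‖S t‖^2 := by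
          apply setIntegral_mono_on
          · exact (hScont.norm.pow 2).integrableOn_Icc
          · exact hgint.mono_set (Set.Icc_subset_Icc (by linarith) (by linarith))
          · exact measurableSet_Icc
          · intro t ht
            rw [Set.mem_Icc] at ht
            have habs : |t| ≤ U := abs_le.2 ⟨ht.1, ht.2⟩
            have h1 : |t|/U ≤ 1 := by rw [div_le_one hU0]; exact habs
            nlinarith [sq_nonneg ‖S t‖, norm_nonneg (S t)]
      _ ≤ ∫ t in Set.Icc (-(2*U)) (2*U), (2 - |t|/U) * ‖S t‖^2 := by
          apply setIntegral_mono_set hgint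
          · filter_upwards [ae_restrict_mem measurableSet_Icc] with t ht
            rw [Set.mem_Icc] at ht
            have habs : |t| ≤ 2*U := abs_le.2 ⟨ht.1, ht.2⟩
            have h1 : |t|/U ≤ 2 := by rw [div_le_iff₀ hU0]; linarith
            have : (0:ℝ) ≤ 2 - |t|/U := by linarith
            positivity
          · exact HasSubset.Subset.eventuallyLE
              (Set.Icc_subset_Icc (by linarith) (by linarith))
  -- Step B : identify with kernel double sum
  have hgmn_cont : ∀ m n : ℕ, Continuous (fun t : ℝ =>
      (c m * (starRingEnd ℂ) (c n)) *
        (((2 - |t|/U : ℝ) : ℂ) *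
          Complex.exp (Complex.I * t * ((Real.log m - Real.log n : ℝ) : ℂ)))) := by
    intro m n
    exact continuous_const.mul (ker_cont U _)
  have stepB : ∫ t in Set.Icc (-(2*U)) (2*U), (2 - |t|/U) * ‖S t‖^2
      = ∑ m ∈ s, ∑ n ∈ s,
          ((c m * (starRingEnd ℂ) (c n)) * ker U (Real.log m - Real.log n)).re := by
    have hpt : ∀ t : ℝ, (2 - |t|/U) * ‖S t‖^2
        = (∑ m ∈ s, ∑ n ∈ s, (c m * (starRingEnd ℂ) (c n)) *
            (((2 - |t|/U : ℝ) : ℂ) *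
              Complex.exp (Complex.I * t * ((Real.log m - Real.log n : ℝ) : ℂ)))).re := by
      intro t
      have hprod : S t * (starRingEnd ℂ) (S t)
          = ∑ m ∈ s, ∑ n ∈ s, (c m * (starRingEnd ℂ) (c n)) *
              Complex.exp (Complex.I * t * ((Real.log m - Real.log n : ℝ) : ℂ)) := by
        rw [hS]
        simp only [map_sum, Finset.sum_mul_sum]
        apply Finset.sum_congr rfl
        intro m _
        apply Finset.sum_congr rfl
        intro n _
        rw [map_mul]
        have hconj : (starRingEnd ℂ) (Complex.exp (Complex.I * t * Real.log n))
            = Complex.exp (-(Complex.I * t * Real.log n)) := by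
          rw [← Complex.exp_conj]
          congr 1
          simp only [map_mul, Complex.conj_I, Complex.conj_ofReal]
          ring
        rw [hconj]
        have h2 : c m * Complex.exp (Complex.I * t * Real.log m) *
            ((starRingEnd ℂ) (c n) * Complex.exp (-(Complex.I * t * Real.log n)))
            = (c m * (starRingEnd ℂ) (c n)) *
              (Complex.exp (Complex.I * t * Real.log m) *
                Complex.exp (-(Complex.I * t * Real.log n))) := by
          ring
        rw [h2, ← Complex.exp_add]
        congr 2
        push_cast
        ring
      have hre : ∀ (w : ℝ) (z : ℂ), w * z.re = (((w : ℝ) : ℂ) * z).re := by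
        intro w z
        simp [Complex.mul_re, Complex.ofReal_re, Complex.ofReal_im]
      rw [hnorm (S t), hre, hprod, Finset.mul_sum]
      congr 1
      apply Finset.sum_congr rfl
      intro m _
      rw [Finset.mul_sum]
      apply Finset.sum_congr rfl
      intro n _
      ring
    calc ∫ t in Set.Icc (-(2*U)) (2*U), (2 - |t|/U) * ‖S t‖^2
        = ∫ t in Set.Icc (-(2*U)) (2*U),
            (∑ m ∈ s, ∑ n ∈ s, (c m * (starRingEnd ℂ) (c n)) *
              (((2 - |t|/U : ℝ) : ℂ) *
                Complex.exp (Complex.I * t * ((Real.log m - Real.log n : ℝ) : ℂ)))).re := by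
          apply setIntegral_congr_fun measurableSet_Icc
          intro t _
          exact hpt t
      _ = (∫ t in Set.Icc (-(2*U)) (2*U),
            ∑ m ∈ s, ∑ n ∈ s, (c m * (starRingEnd ℂ) (c n)) *
              (((2 - |t|/U : ℝ) : ℂ) *
                Complex.exp (Complex.I * t * ((Real.log m - Real.log n : ℝ) : ℂ)))).re := by
          exact integral_re (integrable_finset_sum _ (fun m _ =>
            integrable_finset_sum _ (fun n _ => (hgmn_cont m n).integrableOn_Icc)))
      _ = ∑ m ∈ s, ∑ n ∈ s,
          ((c m * (starRingEnd ℂ) (c n)) * ker U (Real.log m - Real.log n)).re := by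
          rw [MeasureTheory.integral_finset_sum]
          · rw [Complex.re_sum]
            apply Finset.sum_congr rfl
            intro m _
            rw [MeasureTheory.integral_finset_sum]
            · rw [Complex.re_sum]
              apply Finset.sum_congr rfl
              intro n _
              congr 1
              rw [MeasureTheory.integral_const_mul]
              congr 1
              rw [ker, intervalIntegral.integral_of_le (by linarith : -(2*U) ≤ 2*U),
                ← integral_Icc_eq_integral_Ioc]
            · intro n _
              exact (hgmn_cont m n).integrableOn_Icc
          · intro m _
            apply integrable_finset_sum
            intro n _
            exact (hgmn_cont m n).integrableOn_Icc
  -- Step C : bound the double sum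
  have rowbound : ∀ m ∈ s, ∀ n ∈ s, m ≠ n →
      ‖ker U (Real.log m - Real.log n)‖ ≤ 16*M^2/(U*((m:ℝ)-(n:ℝ))^2) := by
    intro m hm n hn hmn
    have hgap := log_gap_sq M hM n m hn hm (fun h => hmn h.symm)
    have hgappos : (0:ℝ) < (((m:ℝ) - n)/(2*M))^2 := by
      have : (m:ℝ) ≠ n := by exact_mod_cast fun h => hmn (Nat.cast_injective h)
      have hne : (m:ℝ) - n ≠ 0 := sub_ne_zero.2 this
      positivity
    have hne : Real.log m - Real.log n ≠ 0 := by
      intro h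
      rw [h] at hgap
      simp at hgap
      rcases hgap with h' | h'
      · rw [h'] at hgappos; simp at hgappos
      · linarith
    have h1 := ker_norm_le_decay U hU0 _ hne
    have h2 : 4/(U*(Real.log m - Real.log n)^2) ≤ 16*M^2/(U*((m:ℝ)-(n:ℝ))^2) := by
      rw [div_le_div_iff₀ (by positivity) (by
        have : (m:ℝ) ≠ n := by exact_mod_cast fun h => hmn (Nat.cast_injective h)
        have hne2 : (m:ℝ) - n ≠ 0 := sub_ne_zero.2 this
        positivity)]
      have hexp : (((m:ℝ) - n)/(2*M))^2 = ((m:ℝ)-n)^2/(4*M^2) := by ring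
      rw [hexp] at hgap
      have := (div_le_iff₀ (by positivity : (0:ℝ) < 4*M^2)).1 hgap
      nlinarith [sq_nonneg ((m:ℝ)-n), hU0]
    linarith
  have rowsum1 : ∀ m ∈ s, ∑ n ∈ s, ‖ker U (Real.log m - Real.log n)‖ ≤ 72*(U+M) := by
    intro m hm
    apply row_sum U M hU hM m hm
    · intro q
      exact ker_norm_le U hU0 _
    · intro q hq hqm
      exact rowbound m hm q hq (fun h => hqm h.symm) |>.trans_eq (by rw [hs] at *; congr 1; ring)
  have rowsum2 : ∀ n ∈ s, ∑ m ∈ s, ‖ker U (Real.log m - Real.log n)‖ ≤ 72*(U+M) := by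
    intro n hn
    apply row_sum U M hU hM n hn
    · intro q
      exact ker_norm_le U hU0 _
    · intro q hq hqn
      exact rowbound q hq n hn hqn
  have stepC : ∑ m ∈ s, ∑ n ∈ s,
        ((c m * (starRingEnd ℂ) (c n)) * ker U (Real.log m - Real.log n)).re
      ≤ 72*(U+M) * ∑ n ∈ s, ‖c n‖^2 := by
    have hterm : ∀ m ∈ s, ∀ n ∈ s,
        ((c m * (starRingEnd ℂ) (c n)) * ker U (Real.log m - Real.log n)).re
        ≤ (‖c m‖^2/2 + ‖c n‖^2/2) * ‖ker U (Real.log m - Real.log n)‖ := by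
      intro m _ n _
      calc ((c m * (starRingEnd ℂ) (c n)) * ker U (Real.log m - Real.log n)).re
          ≤ ‖(c m * (starRingEnd ℂ) (c n)) * ker U (Real.log m - Real.log n)‖ :=
            Complex.re_le_norm _
        _ = ‖c m‖ * ‖c n‖ * ‖ker U (Real.log m - Real.log n)‖ := by
            rw [norm_mul, norm_mul, RCLike.norm_conj]
        _ ≤ (‖c m‖^2/2 + ‖c n‖^2/2) * ‖ker U (Real.log m - Real.log n)‖ := by
            apply mul_le_mul_of_nonneg_right _ (norm_nonneg _)
            nlinarith [sq_nonneg (‖c m‖ - ‖c n‖)]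
    calc ∑ m ∈ s, ∑ n ∈ s,
          ((c m * (starRingEnd ℂ) (c n)) * ker U (Real.log m - Real.log n)).re
        ≤ ∑ m ∈ s, ∑ n ∈ s,
            (‖c m‖^2/2 + ‖c n‖^2/2) * ‖ker U (Real.log m - Real.log n)‖ := by
          apply Finset.sum_le_sum
          intro m hm
          apply Finset.sum_le_sum
          intro n hn
          exact hterm m hm n hn
      _ = ∑ m ∈ s, ∑ n ∈ s, ‖c m‖^2/2 * ‖ker U (Real.log m - Real.log n)‖
          + ∑ m ∈ s, ∑ n ∈ s, ‖c n‖^2/2 * ‖ker U (Real.log m - Real.log n)‖ := by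
          rw [← Finset.sum_add_distrib]
          apply Finset.sum_congr rfl
          intro m _
          rw [← Finset.sum_add_distrib]
          apply Finset.sum_congr rfl
          intro n _
          ring
      _ ≤ 36*(U+M) * ∑ n ∈ s, ‖c n‖^2 + 36*(U+M) * ∑ n ∈ s, ‖c n‖^2 := by
          apply add_le_add
          · calc ∑ m ∈ s, ∑ n ∈ s, ‖c m‖^2/2 * ‖ker U (Real.log m - Real.log n)‖
                = ∑ m ∈ s, ‖c m‖^2/2 * ∑ n ∈ s, ‖ker U (Real.log m - Real.log n)‖ := by
                  apply Finset.sum_congr rfl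
                  intro m _
                  rw [Finset.mul_sum]
              _ ≤ ∑ m ∈ s, ‖c m‖^2/2 * (72*(U+M)) := by
                  apply Finset.sum_le_sum
                  intro m hm
                  exact mul_le_mul_of_nonneg_left (rowsum1 m hm) (by positivity)
              _ = 36*(U+M) * ∑ n ∈ s, ‖c n‖^2 := by
                  rw [Finset.mul_sum]
                  apply Finset.sum_congr rfl
                  intro m _
                  ring
          · calc ∑ m ∈ s, ∑ n ∈ s, ‖c n‖^2/2 * ‖ker U (Real.log m - Real.log n)‖
                = ∑ n ∈ s, ∑ m ∈ s, ‖c n‖^2/2 * ‖ker U (Real.log m - Real.log n)‖ :=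
                  Finset.sum_comm
              _ = ∑ n ∈ s, ‖c n‖^2/2 * ∑ m ∈ s, ‖ker U (Real.log m - Real.log n)‖ := by
                  apply Finset.sum_congr rfl
                  intro n _
                  rw [Finset.mul_sum]
              _ ≤ ∑ n ∈ s, ‖c n‖^2/2 * (72*(U+M)) := by
                  apply Finset.sum_le_sum
                  intro n hn
                  exact mul_le_mul_of_nonneg_left (rowsum2 n hn) (by positivity)
              _ = 36*(U+M) * ∑ n ∈ s, ‖c n‖^2 := by
                  rw [Finset.mul_sum]
                  apply Finset.sum_congr rfl
                  intro n _
                  ring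
      _ = 72*(U+M) * ∑ n ∈ s, ‖c n‖^2 := by ring
  calc ∫ t in Set.Icc (-U) U, ‖S t‖^2
      ≤ ∫ t in Set.Icc (-(2*U)) (2*U), (2 - |t|/U) * ‖S t‖^2 := stepA
    _ = ∑ m ∈ s, ∑ n ∈ s,
          ((c m * (starRingEnd ℂ) (c n)) * ker U (Real.log m - Real.log n)).re := stepB
    _ ≤ 72*(U+M) * ∑ n ∈ s, ‖c n‖^2 := stepC

lemma step1 (U : ℝ) (lam f g : ℝ → ℂ) (hmeas : Measurable lam) (hlam : ∀ t, ‖lam t‖ ≤ 1)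
    (hf : Continuous f) (hg : Continuous g) :
    ‖∫ t in Set.Icc (-U) U, lam t * f t * g t‖
      ≤ (∫ t in Set.Icc (-U) U, ‖f t‖^2)^((1:ℝ)/2)
        * (∫ t in Set.Icc (-U) U, ‖g t‖^2)^((1:ℝ)/2) := by
  have hrpow : ∀ x : ℝ, x ^ (2:ℝ) = x^2 := by
    intro x
    rw [show (2:ℝ) = ((2:ℕ):ℝ) by norm_num, Real.rpow_natCast]
  have hmem : ∀ h : ℝ → ℂ, Continuous h →
      MemLp (fun t => ‖h t‖) (ENNReal.ofReal 2) (volume.restrict (Set.Icc (-U) U)) := by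
    intro h hc
    obtain ⟨C, hC⟩ := (isCompact_Icc (a := -U) (b := U)).exists_bound_of_continuousOn
      hc.norm.continuousOn
    apply MemLp.of_bound (hc.norm.aestronglyMeasurable) C
    filter_upwards [ae_restrict_mem measurableSet_Icc] with t ht
    exact (by simpa using hC t ht)
  have hholder := integral_mul_le_Lp_mul_Lq_of_nonneg
    (Real.HolderConjugate.two_two : Real.HolderConjugate 2 2)
    (Filter.Eventually.of_forall (fun t => norm_nonneg (f t)))
    (Filter.Eventually.of_forall (fun t => norm_nonneg (g t)))
    (hmem f hf) (hmem g hg)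
  calc ‖∫ t in Set.Icc (-U) U, lam t * f t * g t‖
      ≤ ∫ t in Set.Icc (-U) U, ‖lam t * f t * g t‖ := norm_integral_le_integral_norm _
    _ ≤ ∫ t in Set.Icc (-U) U, ‖f t‖ * ‖g t‖ := by
        apply integral_mono_of_nonneg
          (Filter.Eventually.of_forall (fun t => norm_nonneg _))
          ((hf.norm.mul hg.norm).integrableOn_Icc)
        apply Filter.Eventually.of_forall
        intro t
        show ‖lam t * f t * g t‖ ≤ ‖f t‖ * ‖g t‖
        rw [norm_mul, norm_mul]
        calc ‖lam t‖ * ‖f t‖ * ‖g t‖ ≤ 1 * ‖f t‖ * ‖g t‖ := by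
              gcongr
              exact hlam t
          _ = ‖f t‖ * ‖g t‖ := by ring
    _ ≤ (∫ t in Set.Icc (-U) U, ‖f t‖^(2:ℝ))^((1:ℝ)/2)
        * (∫ t in Set.Icc (-U) U, ‖g t‖^(2:ℝ))^((1:ℝ)/2) := hholder
    _ = (∫ t in Set.Icc (-U) U, ‖f t‖^2)^((1:ℝ)/2)
        * (∫ t in Set.Icc (-U) U, ‖g t‖^2)^((1:ℝ)/2) := by
        simp only [hrpow]

lemma coef_sq (r : ℕ) : ((r:ℝ) ^ (-(1/2):ℝ))^2 = ((r:ℝ))⁻¹ := by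
  rw [← Real.rpow_natCast ((r:ℝ) ^ (-(1/2):ℝ)) 2, ← Real.rpow_mul (Nat.cast_nonneg r)]
  norm_num
  rw [Real.rpow_neg_one]

/-- Bilinear estimate via Cauchy–Schwarz and Gallagher's large sieve:
`|∫_{-U}^{U} λ(t) (∑_{R ≤ r < 2R} r^{-1/2-it}) (∑_{N ≤ n < 2N} a(n) n^{-1/2+it}) dt|
  ≤ C √K √((R+U)(N+U))`. -/
theorem bilinear_large_sieve :
    ∃ C : ℝ, 0 < C ∧ ∀ (K : ℝ), 1 ≤ K → ∀ a : ℕ → ℂ, RankinSelbergBound a K →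
      ∀ (U R N : ℝ), 1 ≤ U → 1 ≤ R → 1 ≤ N →
      ∀ lam : ℝ → ℂ, Measurable lam → (∀ t : ℝ, ‖lam t‖ ≤ 1) →
      ‖∫ t in Set.Icc (-U) U,
          lam t *
          (∑ r ∈ Finset.Ico ⌈R⌉₊ ⌈2 * R⌉₊,
              (((r : ℝ) ^ (-(1/2) : ℝ) : ℝ) : ℂ) *
                Complex.exp (-(Complex.I * (t : ℂ) * (Real.log r : ℂ)))) *
          (∑ n ∈ Finset.Ico ⌈N⌉₊ ⌈2 * N⌉₊,
              a n * (((n : ℝ) ^ (-(1/2) : ℝ) : ℝ) : ℂ) *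
                Complex.exp (Complex.I * (t : ℂ) * (Real.log n : ℂ)))‖
        ≤ C * Real.sqrt K * Real.sqrt ((R + U) * (N + U)) := by
  refine ⟨216, by norm_num, ?_⟩
  intro K hK a ha U R N hU hR hN lam hmeas hlam
  have hU0 : 0 < U := by linarith
  have hR0 : 0 < R := by linarith
  have hN0 : 0 < N := by linarith
  have hK0 : 0 < K := by linarith
  have hfc : Continuous (fun t : ℝ => ∑ r ∈ Finset.Ico ⌈R⌉₊ ⌈2 * R⌉₊,
      (((r : ℝ) ^ (-(1/2) : ℝ) : ℝ) : ℂ) *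
        Complex.exp (-(Complex.I * (t : ℂ) * (Real.log r : ℂ)))) := by
    apply continuous_finset_sum
    intro r _
    exact continuous_const.mul (Complex.continuous_exp.comp (by continuity))
  have hgc : Continuous (fun t : ℝ => ∑ n ∈ Finset.Ico ⌈N⌉₊ ⌈2 * N⌉₊,
      a n * (((n : ℝ) ^ (-(1/2) : ℝ) : ℝ) : ℂ) *
        Complex.exp (Complex.I * (t : ℂ) * (Real.log n : ℂ))) := by
    apply continuous_finset_sum
    intro n _
    exact continuous_const.mul (Complex.continuous_exp.comp (by continuity))
  have h1 := step1 U lam _ _ hmeas hlam hfc hgc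
  -- f-side : conjugation
  have hfconj : ∀ t : ℝ, (∑ r ∈ Finset.Ico ⌈R⌉₊ ⌈2 * R⌉₊,
      (((r : ℝ) ^ (-(1/2) : ℝ) : ℝ) : ℂ) *
        Complex.exp (-(Complex.I * (t : ℂ) * (Real.log r : ℂ))))
      = (starRingEnd ℂ) (∑ r ∈ Finset.Ico ⌈R⌉₊ ⌈2 * R⌉₊,
      (((r : ℝ) ^ (-(1/2) : ℝ) : ℝ) : ℂ) *
        Complex.exp (Complex.I * (t : ℂ) * (Real.log r : ℂ))) := by
    intro t
    rw [map_sum]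
    apply Finset.sum_congr rfl
    intro r _
    rw [map_mul, Complex.conj_ofReal]
    congr 1
    rw [← Complex.exp_conj]
    congr 1
    simp only [map_mul, Complex.conj_I, Complex.conj_ofReal]
    ring
  -- coefficient sum bounds
  have hSigR : ∑ r ∈ Finset.Ico ⌈R⌉₊ ⌈2 * R⌉₊,
      ‖(((r : ℝ) ^ (-(1/2) : ℝ) : ℝ) : ℂ)‖^2 ≤ 3 := by
    have hcard : ((Finset.Ico ⌈R⌉₊ ⌈2*R⌉₊).card : ℝ) ≤ 3*R := by
      rw [Nat.card_Ico]
      have h1 : (⌈2*R⌉₊ - ⌈R⌉₊ : ℕ) ≤ ⌈2*R⌉₊ := Nat.sub_le _ _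
      have h2 : ((⌈2*R⌉₊ : ℕ):ℝ) < 2*R+1 := Nat.ceil_lt_add_one (by positivity)
      have h3 : ((⌈2*R⌉₊ - ⌈R⌉₊ : ℕ):ℝ) ≤ ((⌈2*R⌉₊ : ℕ):ℝ) := by exact_mod_cast h1
      linarith
    calc ∑ r ∈ Finset.Ico ⌈R⌉₊ ⌈2 * R⌉₊, ‖(((r : ℝ) ^ (-(1/2) : ℝ) : ℝ) : ℂ)‖^2
        ≤ ∑ r ∈ Finset.Ico ⌈R⌉₊ ⌈2 * R⌉₊, R⁻¹ := by
          apply Finset.sum_le_sum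
          intro r hr
          rw [Finset.mem_Ico] at hr
          have hRr : R ≤ (r:ℝ) := le_trans (Nat.le_ceil R) (by exact_mod_cast hr.1)
          have hnorm : ‖(((r:ℝ)^(-(1/2):ℝ) : ℝ):ℂ)‖ = (r:ℝ)^(-(1/2):ℝ) := by
            rw [Complex.norm_real, Real.norm_eq_abs,
              _root_.abs_of_nonneg (Real.rpow_nonneg (Nat.cast_nonneg r) _)]
          rw [hnorm, coef_sq r]
          exact inv_anti₀ hR0 hRr
      _ = ((Finset.Ico ⌈R⌉₊ ⌈2*R⌉₊).card : ℝ) * R⁻¹ := by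
          rw [Finset.sum_const, nsmul_eq_mul]
      _ ≤ 3*R * R⁻¹ := by
          apply mul_le_mul_of_nonneg_right hcard (by positivity)
      _ = 3 := by field_simp
  have hSigN : ∑ n ∈ Finset.Ico ⌈N⌉₊ ⌈2 * N⌉₊,
      ‖a n * (((n : ℝ) ^ (-(1/2) : ℝ) : ℝ) : ℂ)‖^2 ≤ 3*K := by
    have hsub : Finset.Ico ⌈N⌉₊ ⌈2*N⌉₊ ⊆ Finset.Icc 1 ⌊2*N⌋₊ := by
      intro n hn
      rw [Finset.mem_Ico] at hn
      rw [Finset.mem_Icc]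
      constructor
      · exact le_trans (Nat.one_le_ceil_iff.2 hN0) hn.1
      · have := Nat.ceil_le_floor_add_one (2*N)
        omega
    calc ∑ n ∈ Finset.Ico ⌈N⌉₊ ⌈2 * N⌉₊, ‖a n * (((n : ℝ) ^ (-(1/2) : ℝ) : ℝ) : ℂ)‖^2
        ≤ ∑ n ∈ Finset.Ico ⌈N⌉₊ ⌈2 * N⌉₊, ‖a n‖^2 * N⁻¹ := by
          apply Finset.sum_le_sum
          intro n hn
          rw [Finset.mem_Ico] at hn
          have hNn : N ≤ (n:ℝ) := le_trans (Nat.le_ceil N) (by exact_mod_cast hn.1)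
          have hnorm : ‖(((n:ℝ)^(-(1/2):ℝ) : ℝ):ℂ)‖ = (n:ℝ)^(-(1/2):ℝ) := by
            rw [Complex.norm_real, Real.norm_eq_abs,
              _root_.abs_of_nonneg (Real.rpow_nonneg (Nat.cast_nonneg n) _)]
          rw [norm_mul, mul_pow, hnorm, coef_sq n]
          apply mul_le_mul_of_nonneg_left _ (by positivity)
          exact inv_anti₀ hN0 hNn
      _ = (∑ n ∈ Finset.Ico ⌈N⌉₊ ⌈2 * N⌉₊, ‖a n‖^2) * N⁻¹ := by
          rw [← Finset.sum_mul]
      _ ≤ (K * (2*N)) * N⁻¹ := by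
          apply mul_le_mul_of_nonneg_right _ (by positivity)
          calc ∑ n ∈ Finset.Ico ⌈N⌉₊ ⌈2 * N⌉₊, ‖a n‖^2
              ≤ ∑ n ∈ Finset.Icc 1 ⌊2*N⌋₊, ‖a n‖^2 :=
                Finset.sum_le_sum_of_subset_of_nonneg hsub (fun n _ _ => by positivity)
            _ ≤ K * (2*N) := ha (2*N) (by linarith)
      _ = 2*K := by field_simp
      _ ≤ 3*K := by linarith
  -- integral bounds
  have hFint : ∫ t in Set.Icc (-U) U, ‖∑ r ∈ Finset.Ico ⌈R⌉₊ ⌈2 * R⌉₊,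
      (((r : ℝ) ^ (-(1/2) : ℝ) : ℝ) : ℂ) *
        Complex.exp (-(Complex.I * (t : ℂ) * (Real.log r : ℂ)))‖^2 ≤ 216*(R+U) := by
    have heq : ∫ t in Set.Icc (-U) U, ‖∑ r ∈ Finset.Ico ⌈R⌉₊ ⌈2 * R⌉₊,
        (((r : ℝ) ^ (-(1/2) : ℝ) : ℝ) : ℂ) *
          Complex.exp (-(Complex.I * (t : ℂ) * (Real.log r : ℂ)))‖^2
        = ∫ t in Set.Icc (-U) U, ‖∑ r ∈ Finset.Ico ⌈R⌉₊ ⌈2 * R⌉₊,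
        (((r : ℝ) ^ (-(1/2) : ℝ) : ℝ) : ℂ) *
          Complex.exp (Complex.I * (t : ℂ) * (Real.log r : ℂ))‖^2 := by
      apply MeasureTheory.integral_congr_ae
      apply Filter.Eventually.of_forall
      intro t
      simp only []
      rw [hfconj t, RCLike.norm_conj]
    rw [heq]
    calc ∫ t in Set.Icc (-U) U, ‖∑ r ∈ Finset.Ico ⌈R⌉₊ ⌈2 * R⌉₊,
        (((r : ℝ) ^ (-(1/2) : ℝ) : ℝ) : ℂ) *
          Complex.exp (Complex.I * (t : ℂ) * (Real.log r : ℂ))‖^2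
        ≤ 72*(U+R) * ∑ r ∈ Finset.Ico ⌈R⌉₊ ⌈2*R⌉₊,
            ‖(((r : ℝ) ^ (-(1/2) : ℝ) : ℝ) : ℂ)‖^2 :=
          meanvalue U R hU hR _
      _ ≤ 72*(U+R) * 3 := by
          apply mul_le_mul_of_nonneg_left hSigR (by positivity)
      _ = 216*(R+U) := by ring
  have hGint : ∫ t in Set.Icc (-U) U, ‖∑ n ∈ Finset.Ico ⌈N⌉₊ ⌈2 * N⌉₊,
      a n * (((n : ℝ) ^ (-(1/2) : ℝ) : ℝ) : ℂ) *
        Complex.exp (Complex.I * (t : ℂ) * (Real.log n : ℂ))‖^2 ≤ 216*K*(N+U) := by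
    calc ∫ t in Set.Icc (-U) U, ‖∑ n ∈ Finset.Ico ⌈N⌉₊ ⌈2 * N⌉₊,
        a n * (((n : ℝ) ^ (-(1/2) : ℝ) : ℝ) : ℂ) *
          Complex.exp (Complex.I * (t : ℂ) * (Real.log n : ℂ))‖^2
        ≤ 72*(U+N) * ∑ n ∈ Finset.Ico ⌈N⌉₊ ⌈2*N⌉₊,
            ‖a n * (((n : ℝ) ^ (-(1/2) : ℝ) : ℝ) : ℂ)‖^2 :=
          meanvalue U N hU hN _
      _ ≤ 72*(U+N) * (3*K) := by
          apply mul_le_mul_of_nonneg_left hSigN (by positivity)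
      _ = 216*K*(N+U) := by ring
  refine le_trans h1 ?_
  have hint1nonneg : (0:ℝ) ≤ ∫ t in Set.Icc (-U) U, ‖∑ r ∈ Finset.Ico ⌈R⌉₊ ⌈2 * R⌉₊,
      (((r : ℝ) ^ (-(1/2) : ℝ) : ℝ) : ℂ) *
        Complex.exp (-(Complex.I * (t : ℂ) * (Real.log r : ℂ)))‖^2 :=
    integral_nonneg (fun t => by positivity)
  have hint2nonneg : (0:ℝ) ≤ ∫ t in Set.Icc (-U) U, ‖∑ n ∈ Finset.Ico ⌈N⌉₊ ⌈2 * N⌉₊,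
      a n * (((n : ℝ) ^ (-(1/2) : ℝ) : ℝ) : ℂ) *
        Complex.exp (Complex.I * (t : ℂ) * (Real.log n : ℂ))‖^2 :=
    integral_nonneg (fun t => by positivity)
  calc (∫ t in Set.Icc (-U) U, ‖∑ r ∈ Finset.Ico ⌈R⌉₊ ⌈2 * R⌉₊,
          (((r : ℝ) ^ (-(1/2) : ℝ) : ℝ) : ℂ) *
            Complex.exp (-(Complex.I * (t : ℂ) * (Real.log r : ℂ)))‖^2)^((1:ℝ)/2)
        * (∫ t in Set.Icc (-U) U, ‖∑ n ∈ Finset.Ico ⌈N⌉₊ ⌈2 * N⌉₊,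
          a n * (((n : ℝ) ^ (-(1/2) : ℝ) : ℝ) : ℂ) *
            Complex.exp (Complex.I * (t : ℂ) * (Real.log n : ℂ))‖^2)^((1:ℝ)/2)
      ≤ (216*(R+U))^((1:ℝ)/2) * (216*K*(N+U))^((1:ℝ)/2) := by
        apply mul_le_mul
        · exact Real.rpow_le_rpow hint1nonneg hFint (by norm_num)
        · exact Real.rpow_le_rpow hint2nonneg hGint (by norm_num)
        · exact Real.rpow_nonneg hint2nonneg _
        · exact Real.rpow_nonneg (by positivity) _
    _ = 216 * Real.sqrt K * Real.sqrt ((R + U) * (N + U)) := by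
        rw [← Real.sqrt_eq_rpow, ← Real.sqrt_eq_rpow,
          ← Real.sqrt_mul (by positivity : (0:ℝ) ≤ 216*(R+U)),
          show (216*(R+U)) * (216*K*(N+U)) = (216:ℝ)^2 * (K * ((R+U)*(N+U))) from by ring,
          Real.sqrt_mul (by positivity : (0:ℝ) ≤ (216:ℝ)^2),
          Real.sqrt_sq (by norm_num : (0:ℝ) ≤ 216),
          Real.sqrt_mul (by positivity : (0:ℝ) ≤ K)]
        ring
end
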